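/- arXiv:1907.11987 — 7 statements merged into one kernel-verified Lean document; each statement's English description precedes it below -/
import Mathlib

section
/- Let ω : 𝔻 → 𝔻 be analytic with ω(0) = 0 and ω'(0) = a ∈ (0,1]. Then for all z ∈ 𝔻, |ω(z) - z| ≤ (1 - a) · |z|(1 + |z|) / (1 - a|z|). -/
open Metric Set

/-- If `ω` is an analytic self-map of the unit disc with `ω(0) = 0` and
`ω'(0) = a ∈ (0,1]`, then `|ω(z) - z| ≤ (1-a)·|z|(1+|z|)/(1-a|z|)` on the disc. -/
theorem dist_to_identity (ω : ℂ → ℂ) (a : ℝ)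
    (hω : DifferentiableOn ℂ ω (ball 0 1))
    (hmaps : MapsTo ω (ball 0 1) (ball 0 1))
    (h0 : ω 0 = 0)
    (ha : 0 < a) (ha1 : a ≤ 1) (hderiv : deriv ω 0 = (a : ℂ)) :
    ∀ z ∈ ball (0 : ℂ) 1,
      ‖ω z - z‖ ≤ (1 - a) * (‖z‖ * (1 + ‖z‖)) / (1 - a * ‖z‖) := by
  intro z hz
  have hball : (0 : ℂ) ∈ ball (0 : ℂ) 1 := mem_ball_self one_pos
  have hmaps' : MapsTo ω (ball 0 1) (ball (ω 0) 1) := by rwa [h0]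
  rcases eq_or_lt_of_le ha1 with rfl | ha1'
  · -- a = 1 : equality case of Schwarz lemma, ω = id
    have hd1 : ‖dslope ω 0 0‖ = 1 / 1 := by
      rw [dslope_same, hderiv]; simp
    have heq := Complex.affine_of_mapsTo_ball_of_exists_norm_dslope_eq_div
      hω (hmaps'.mono_right ball_subset_closedBall) hball hd1
    have hωz : ω z = z := by
      have := heq hz
      simp only [h0, dslope_same, hderiv] at this
      simpa using this
    simp [hωz]
  -- a < 1
  set g := dslope ω 0 with hgdef
  have hgd : DifferentiableOn ℂ g (ball 0 1) :=
    (Complex.differentiableOn_dslope (isOpen_ball.mem_nhds hball)).mpr hω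
  have hg0 : g 0 = (a : ℂ) := by rw [hgdef, dslope_same, hderiv]
  have hg_le : ∀ w ∈ ball (0 : ℂ) 1, ‖g w‖ ≤ 1 := fun w hw => by
    simpa using Complex.norm_dslope_le_div_of_mapsTo_ball hω (hmaps'.mono_right ball_subset_closedBall) hw
  have hglt : ∀ w ∈ ball (0 : ℂ) 1, ‖g w‖ < 1 := by
    intro w hw
    rcases lt_or_ge ‖g w‖ 1 with h | h
    · exact h
    exfalso
    have heq1 : ‖g w‖ = 1 := le_antisymm (hg_le w hw) h
    have hmax : IsMaxOn (norm ∘ g) (ball 0 1) w := fun y hy => by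
      simpa [heq1] using hg_le y hy
    have hcst := Complex.eqOn_of_isPreconnected_of_isMaxOn_norm
      (convex_ball (0 : ℂ) 1).isPreconnected isOpen_ball hgd hw hmax hball
    have hcst' : g 0 = g w := by simpa using hcst
    have : (1 : ℝ) = a := by
      rw [← heq1, ← hcst', hg0, Complex.norm_real, Real.norm_of_nonneg ha.le]
    linarith
  -- denominators nonzero
  have hden : ∀ w ∈ ball (0 : ℂ) 1, (1 : ℂ) - (a : ℂ) * g w ≠ 0 := by
    intro w hw h
    have h1 : ‖(a : ℂ) * g w‖ < 1 := by
      rw [norm_mul, Complex.norm_real, Real.norm_of_nonneg ha.le]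
      calc a * ‖g w‖ ≤ 1 * ‖g w‖ :=
            mul_le_mul_of_nonneg_right ha1 (norm_nonneg _)
        _ = ‖g w‖ := one_mul _
        _ < 1 := hglt w hw
    have h2 : (a : ℂ) * g w = 1 := by linear_combination -h
    rw [h2, norm_one] at h1
    exact lt_irrefl _ h1
  -- key Möbius inequality : ‖g w - a‖ < ‖1 - a g w‖
  have hkey : ∀ w ∈ ball (0 : ℂ) 1, ‖g w - (a : ℂ)‖ < ‖1 - (a : ℂ) * g w‖ := by
    intro w hw
    set u := g w
    have hu : Complex.normSq u < 1 := by
      have h := hglt w hw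
      rw [← Complex.sq_norm]
      nlinarith [norm_nonneg u]
    have h1 : Complex.normSq (u - (a : ℂ)) < Complex.normSq (1 - (a : ℂ) * u) := by
      simp only [Complex.normSq_apply, Complex.sub_re, Complex.sub_im, Complex.mul_re,
        Complex.mul_im, Complex.ofReal_re, Complex.ofReal_im, Complex.one_re, Complex.one_im]
      have hu' : u.re ^ 2 + u.im ^ 2 < 1 := by
        simpa [Complex.normSq_apply, sq] using hu
      have hA : (0:ℝ) < 1 - a * a := by nlinarith
      have hB : (0:ℝ) < 1 - (u.re ^ 2 + u.im ^ 2) := by linarith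
      nlinarith [mul_pos hA hB]
    have h2 : ‖u - (a : ℂ)‖ ^ 2 < ‖1 - (a : ℂ) * u‖ ^ 2 := by
      rw [Complex.sq_norm, Complex.sq_norm]
      exact h1
    exact lt_of_pow_lt_pow_left₀ 2 (norm_nonneg _) h2
  -- define the Möbius transform φ
  set φ : ℂ → ℂ := fun w => (g w - (a : ℂ)) / (1 - (a : ℂ) * g w) with hφdef
  have hφd : DifferentiableOn ℂ φ (ball 0 1) := by
    apply DifferentiableOn.div
    · exact hgd.sub (differentiableOn_const _)
    · exact (differentiableOn_const _).sub ((differentiableOn_const _).mul hgd)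
    · exact hden
  have hφ0 : φ 0 = 0 := by
    simp [hφdef, hg0]
  have hφmaps : MapsTo φ (ball 0 1) (ball 0 1) := by
    intro w hw
    rw [mem_ball_zero_iff, hφdef]
    rw [norm_div, div_lt_one (norm_pos_iff.2 (hden w hw))]
    exact hkey w hw
  -- Schwarz lemma applied to φ
  have hφz : ‖φ z‖ ≤ ‖z‖ := by
    have hz' : ‖z‖ < 1 := by
      rw [← mem_ball_zero_iff]; exact hz
    simpa using
      Complex.norm_le_norm_of_mapsTo_ball hφd (hφmaps.mono_right ball_subset_closedBall) hφ0 hz'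
  have hmul : ‖g z - (a : ℂ)‖ ≤ ‖z‖ * ‖1 - (a : ℂ) * g z‖ := by
    have h := hφz
    rw [hφdef] at h
    rw [norm_div, div_le_iff₀ (norm_pos_iff.2 (hden z hz))] at h
    exact h
  -- algebra with the triangle inequality
  set t := ‖g z - 1‖ with htdef
  have hamc : ‖((a : ℂ) - 1)‖ = 1 - a := by
    rw [show ((a : ℂ) - 1) = ((a - 1 : ℝ) : ℂ) by push_cast; ring,
      Complex.norm_real, Real.norm_eq_abs, abs_of_nonpos (by linarith)]
    ring
  have ht1 : t ≤ ‖g z - (a : ℂ)‖ + (1 - a) := by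
    calc t = ‖(g z - (a : ℂ)) + ((a : ℂ) - 1)‖ := by rw [htdef]; ring_nf
      _ ≤ ‖g z - (a : ℂ)‖ + ‖((a : ℂ) - 1)‖ := norm_add_le _ _
      _ = ‖g z - (a : ℂ)‖ + (1 - a) := by rw [hamc]
  have ht2 : ‖1 - (a : ℂ) * g z‖ ≤ (1 - a) + a * t := by
    calc ‖1 - (a : ℂ) * g z‖ = ‖(1 - (a : ℂ)) + (a : ℂ) * (1 - g z)‖ := by ring_nf
      _ ≤ ‖1 - (a : ℂ)‖ + ‖(a : ℂ) * (1 - g z)‖ := norm_add_le _ _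
      _ = (1 - a) + a * t := by
          rw [norm_mul, Complex.norm_real, Real.norm_of_nonneg ha.le, ← norm_neg (1 - g z)]
          rw [show -(1 - g z) = g z - 1 by ring, ← htdef, ← norm_neg (1 - (a : ℂ))]
          rw [show -(1 - (a : ℂ)) = (a : ℂ) - 1 by ring, hamc]
  have hz1 : ‖z‖ < 1 := mem_ball_zero_iff.1 hz
  have hdpos : 0 < 1 - a * ‖z‖ := by nlinarith [norm_nonneg z]
  have htb : t ≤ (1 - a) * (1 + ‖z‖) / (1 - a * ‖z‖) := by
    rw [le_div_iff₀ hdpos]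
    have : t ≤ ‖z‖ * ((1 - a) + a * t) + (1 - a) := by
      calc t ≤ ‖g z - (a : ℂ)‖ + (1 - a) := ht1
        _ ≤ ‖z‖ * ‖1 - (a : ℂ) * g z‖ + (1 - a) := by linarith [hmul]
        _ ≤ ‖z‖ * ((1 - a) + a * t) + (1 - a) := by
            have := mul_le_mul_of_nonneg_left ht2 (norm_nonneg z)
            linarith
    nlinarith [norm_nonneg z]
  -- conclude
  rcases eq_or_ne z 0 with rfl | hzne
  · simp [h0]
  have hωzt : ‖ω z - z‖ = ‖z‖ * t := by
    have hgz : g z = z⁻¹ * ω z := by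
      rw [hgdef, dslope_of_ne _ hzne, slope_def_field, h0]
      field_simp
      ring
    have : ω z - z = z * (g z - 1) := by
      rw [hgz]
      field_simp
    rw [this, norm_mul, htdef]
  rw [hωzt]
  calc ‖z‖ * t ≤ ‖z‖ * ((1 - a) * (1 + ‖z‖) / (1 - a * ‖z‖)) :=
        mul_le_mul_of_nonneg_left htb (norm_nonneg z)
    _ = (1 - a) * (‖z‖ * (1 + ‖z‖)) / (1 - a * ‖z‖) := by ring
end

section
/- Let ω : 𝔻 → 𝔻 be analytic with ω(0) = 0 and ω'(0) = a ∈ (0,1]. Then for all z ∈ 𝔻, |ω(z)| ≤ |z| · (|z| + a)/(1 + a|z|). -/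
open Metric Set

private lemma normsq1 (a : ℝ) (u : ℂ) : ‖u - (a:ℂ)‖^2 = ‖u‖^2 - 2*a*u.re + a^2 := by
  simp only [Complex.sq_norm, Complex.normSq_apply, Complex.sub_re,
    Complex.sub_im, Complex.ofReal_re, Complex.ofReal_im]
  ring

private lemma normsq2 (a : ℝ) (u : ℂ) : ‖(1:ℂ) - a*u‖^2 = 1 - 2*a*u.re + a^2*‖u‖^2 := by
  simp only [Complex.sq_norm, Complex.normSq_apply, Complex.sub_re,
    Complex.sub_im, Complex.mul_re, Complex.mul_im, Complex.one_re, Complex.one_im,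
    Complex.ofReal_re, Complex.ofReal_im]
  ring

/-- Refined Schwarz lemma: if `ω` is an analytic self-map of the unit disc with
`ω(0) = 0` and `ω'(0) = a ∈ (0,1]`, then `|ω(z)| ≤ |z|·(|z|+a)/(1+a|z|)`. -/
theorem growth_estimate (ω : ℂ → ℂ) (a : ℝ)
    (hω : DifferentiableOn ℂ ω (ball 0 1))
    (hmaps : MapsTo ω (ball 0 1) (ball 0 1))
    (h0 : ω 0 = 0)
    (ha : 0 < a) (ha1 : a ≤ 1) (hderiv : deriv ω 0 = (a : ℂ)) :
    ∀ z ∈ ball (0 : ℂ) 1, ‖ω z‖ ≤ ‖z‖ * ((‖z‖ + a) / (1 + a * ‖z‖)) := by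
  have h0mem : (0:ℂ) ∈ ball (0:ℂ) 1 := by simp
  set g : ℂ → ℂ := dslope ω 0 with hgdef
  have hgd : DifferentiableOn ℂ g (ball 0 1) :=
    (Complex.differentiableOn_dslope (isOpen_ball.mem_nhds h0mem)).mpr hω
  have hmaps' : MapsTo ω (ball 0 1) (ball (ω 0) 1) := by rwa [h0]
  have hg1 : ∀ z ∈ ball (0:ℂ) 1, ‖g z‖ ≤ 1 := fun z hz => by
    simpa using Complex.norm_dslope_le_div_of_mapsTo_ball hω (hmaps'.mono_right ball_subset_closedBall) hz
  have hg0 : g 0 = (a:ℂ) := by rw [hgdef, dslope_same, hderiv]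
  -- key bound on g
  have key : ∀ z ∈ ball (0:ℂ) 1, ‖g z‖ ≤ (‖z‖ + a) / (1 + a * ‖z‖) := by
    by_cases hstrict : ∀ z ∈ ball (0:ℂ) 1, ‖g z‖ < 1
    · -- Schwarz–Pick argument
      have halt : a < 1 := by
        have := hstrict 0 h0mem
        rwa [hg0, Complex.norm_real, Real.norm_eq_abs, abs_of_pos ha] at this
      set h : ℂ → ℂ := fun w => (g w - a) / (1 - a * g w) with hhdef
      have hden : ∀ w ∈ ball (0:ℂ) 1, (1:ℂ) - a * g w ≠ 0 := by
        intro w hw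
        have hlt : ‖(a:ℂ) * g w‖ < 1 := by
          rw [norm_mul, Complex.norm_real, Real.norm_eq_abs, abs_of_pos ha]
          calc a * ‖g w‖ ≤ 1 * ‖g w‖ :=
                mul_le_mul_of_nonneg_right ha1 (norm_nonneg _)
            _ < 1 := by simpa using hstrict w hw
        intro hc
        have h1 : (1:ℂ) = a * g w := by linear_combination hc
        rw [← h1] at hlt
        simp at hlt
      have hhd : DifferentiableOn ℂ h (ball 0 1) := by
        apply DifferentiableOn.div
        · exact hgd.sub (differentiableOn_const _)
        · exact (differentiableOn_const _).sub ((differentiableOn_const _).mul hgd)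
        · exact hden
      have hstrict2 : ∀ w ∈ ball (0:ℂ) 1, ‖g w - (a:ℂ)‖ < ‖(1:ℂ) - a * g w‖ := by
        intro w hw
        refine lt_of_pow_lt_pow_left₀ 2 (norm_nonneg _) ?_
        rw [normsq1, normsq2]
        have h1 : ‖g w‖ < 1 := hstrict w hw
        have h2 : |(g w).re| ≤ ‖g w‖ := Complex.abs_re_le_norm (g w)
        have h3 := abs_le.mp h2
        nlinarith [norm_nonneg (g w), mul_pos (by nlinarith : (0:ℝ) < 1 - a^2)
          (by nlinarith : (0:ℝ) < 1 - ‖g w‖^2)]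
      have hfrac : ∀ w ∈ ball (0:ℂ) 1, ‖h w‖ < 1 := by
        intro w hw
        rw [hhdef]
        simp only
        rw [norm_div, div_lt_one (norm_pos_iff.mpr (hden w hw))]
        exact hstrict2 w hw
      have hmapsh : MapsTo h (ball (0:ℂ) 1) (ball (h 0) 1) := by
        intro w hw
        have hh0 : h 0 = 0 := by
          rw [hhdef]; simp only [hg0]; simp
        rw [hh0, mem_ball, dist_zero_right]
        exact hfrac w hw
      intro z hz
      have hschwarz := Complex.dist_le_div_mul_dist_of_mapsTo_ball hhd (hmapsh.mono_right ball_subset_closedBall) hz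
      have hh0 : h 0 = 0 := by rw [hhdef]; simp only [hg0]; simp
      rw [hh0, dist_zero_right, dist_zero_right, div_self one_ne_zero, one_mul] at hschwarz
      -- ‖h z‖ ≤ ‖z‖
      have hne : (1:ℂ) - a * g z ≠ 0 := hden z hz
      have hkey : ‖g z - (a:ℂ)‖ ≤ ‖z‖ * ‖(1:ℂ) - a * g z‖ := by
        have : ‖h z‖ = ‖g z - (a:ℂ)‖ / ‖(1:ℂ) - a * g z‖ := by
          rw [hhdef]; simp only [norm_div]
        rw [this, div_le_iff₀ (norm_pos_iff.mpr hne)] at hschwarz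
        linarith [hschwarz]
      set s := ‖g z‖ with hs
      set t := ‖z‖ with ht
      have hs0 : 0 ≤ s := norm_nonneg _
      have ht0 : 0 ≤ t := norm_nonneg _
      have ht1 : t < 1 := by simpa [ht, dist_zero_right] using mem_ball.mp hz
      have hr := abs_le.mp (Complex.abs_re_le_norm (g z))
      have hsq : s^2 - 2*a*(g z).re + a^2 ≤ t^2 * (1 - 2*a*(g z).re + a^2*s^2) := by
        have hsq' : ‖g z - (a:ℂ)‖^2 ≤ (t * ‖(1:ℂ) - a * g z‖)^2 := by
          apply pow_le_pow_left₀ (norm_nonneg _) hkey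
        rw [normsq1, mul_pow, normsq2] at hsq'
        exact hsq'
      have hden2 : 0 < 1 + a * t := by positivity
      rw [le_div_iff₀ hden2]
      have hre : (g z).re ≤ s := by
        simpa [hs] using hr.2
      have hQ : (s*(1+a*t)-(a+t)) * (s*(1-a*t)-(a-t)) ≤ 0 := by
        nlinarith [hsq, mul_nonneg (mul_nonneg ha.le (by nlinarith : (0:ℝ) ≤ 1 - t^2))
          (sub_nonneg.mpr hre)]
      have has1 : a * s ≤ 1 := by nlinarith [hstrict z hz]
      have hX : s*(1+a*t)-(a+t) ≤ s*(1-a*t)-(a-t) := by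
        nlinarith [mul_nonneg ht0 (sub_nonneg.mpr has1)]
      by_contra hc
      push_neg at hc
      have hXpos : 0 < s*(1+a*t)-(a+t) := by linarith
      have : 0 < (s*(1+a*t)-(a+t)) * (s*(1-a*t)-(a-t)) :=
        mul_pos hXpos (lt_of_lt_of_le hXpos hX)
      linarith
    · -- g attains norm 1 on the ball, hence is constant, and a = 1
      push_neg at hstrict
      obtain ⟨z0, hz0, hz0'⟩ := hstrict
      have heq : ‖g z0‖ = 1 := le_antisymm (hg1 z0 hz0) hz0'
      have hmax : IsMaxOn (norm ∘ g) (ball (0:ℂ) 1) z0 := by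
        intro w hw; simp only [Function.comp]; rw [heq]; exact hg1 w hw
      have hconst := Complex.eqOn_of_isPreconnected_of_isMaxOn_norm
        (convex_ball _ _).isPreconnected isOpen_ball hgd hz0 hmax
      have hga : g z0 = (a:ℂ) := by
        have := hconst h0mem
        rw [hg0] at this; exact this.symm
      have ha1' : a = 1 := by
        rw [hga, Complex.norm_real, Real.norm_eq_abs, abs_of_pos ha] at heq; exact heq
      intro z hz
      have hgz : g z = (a:ℂ) := (hconst hz).trans hga
      rw [hgz, Complex.norm_real, Real.norm_eq_abs, abs_of_pos ha, ha1']
      have hzn : (0:ℝ) ≤ ‖z‖ := norm_nonneg z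
      rw [le_div_iff₀ (by linarith : (0:ℝ) < 1 + 1 * ‖z‖)]
      nlinarith
  -- conclude
  intro z hz
  rcases eq_or_ne z 0 with rfl | hne
  · rw [h0]
    simp only [norm_zero, zero_mul]
    exact le_rfl
  · have hω_eq : ω z = z * g z := by
      rw [hgdef, dslope_of_ne _ hne, slope_def_field]
      field_simp [h0]
      rw [h0, sub_zero, sub_zero, mul_comm]
    rw [hω_eq, norm_mul]
    exact mul_le_mul_of_nonneg_left (key z hz) (norm_nonneg z)
end

section
/- Let ω : 𝔻 → 𝔻 be analytic with ω(0) = 0 and ω'(0) = a ∈ (0,1]. Then for all z ∈ 𝔻, |ω(z)/z - a(1-|z|²)/(1 - a²|z|²)| ≤ (1 - a²)|z| / (1 - a²|z|²). -/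
open Metric Set

/-- Helper: complex norm squared via real and imaginary parts. -/
lemma norm_sq_re_im (x : ℂ) : ‖x‖ ^ 2 = x.re ^ 2 + x.im ^ 2 := by
  rw [Complex.sq_norm, Complex.normSq_apply]
  ring

/-- Key algebraic step: from the pseudo-hyperbolic bound `‖a - w‖ ≤ t * ‖1 - a w‖`
derive the Euclidean disc bound. -/
lemma schwarz_pick_algebra (w : ℂ) (a t : ℝ) (ha : 0 < a) (ha1 : a ≤ 1)
    (ht : 0 ≤ t) (ht1 : t < 1)
    (hSP : ‖(a : ℂ) - w‖ ≤ t * ‖1 - (a : ℂ) * w‖) :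
    ‖w - ((a * (1 - t ^ 2) / (1 - a ^ 2 * t ^ 2) : ℝ) : ℂ)‖ ≤
      (1 - a ^ 2) * t / (1 - a ^ 2 * t ^ 2) := by
  have ha2 : a ^ 2 ≤ 1 := by nlinarith
  have ht2 : t ^ 2 < 1 := by nlinarith
  have hD : 0 < 1 - a ^ 2 * t ^ 2 := by nlinarith [sq_nonneg t]
  set u := w.re with hu
  set v := w.im with hv
  have hsq : ((a : ℝ) - u) ^ 2 + v ^ 2 ≤ t ^ 2 * ((1 - a * u) ^ 2 + (a * v) ^ 2) := by
    have h1 : ‖(a : ℂ) - w‖ ^ 2 ≤ (t * ‖1 - (a : ℂ) * w‖) ^ 2 :=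
      pow_le_pow_left₀ (norm_nonneg _) hSP 2
    have e1 : ‖(a : ℂ) - w‖ ^ 2 = ((a : ℝ) - u) ^ 2 + v ^ 2 := by
      rw [norm_sq_re_im]; simp [hu, hv]
    have e2 : ‖1 - (a : ℂ) * w‖ ^ 2 = (1 - a * u) ^ 2 + (a * v) ^ 2 := by
      rw [norm_sq_re_im]; simp [hu, hv]
    calc ((a : ℝ) - u) ^ 2 + v ^ 2 = ‖(a : ℂ) - w‖ ^ 2 := e1.symm
      _ ≤ (t * ‖1 - (a : ℂ) * w‖) ^ 2 := h1
      _ = t ^ 2 * ((1 - a * u) ^ 2 + (a * v) ^ 2) := by rw [mul_pow, e2]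
  have hr : 0 ≤ (1 - a ^ 2) * t / (1 - a ^ 2 * t ^ 2) :=
    div_nonneg (mul_nonneg (by linarith) ht) hD.le
  set c : ℝ := a * (1 - t ^ 2) / (1 - a ^ 2 * t ^ 2) with hcdef
  have hc : c * (1 - a ^ 2 * t ^ 2) = a * (1 - t ^ 2) := by
    rw [hcdef]; field_simp
  have hgoal_sq : ‖w - ((c : ℝ) : ℂ)‖ ^ 2 ≤
      ((1 - a ^ 2) * t / (1 - a ^ 2 * t ^ 2)) ^ 2 := by
    have e3 : ‖w - ((c : ℝ) : ℂ)‖ ^ 2 = (u - c) ^ 2 + v ^ 2 := by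
      rw [norm_sq_re_im]; simp [hu, hv]
    rw [e3, div_pow, le_div_iff₀ (by positivity)]
    have hcd : (u - c) * (1 - a ^ 2 * t ^ 2) = u * (1 - a ^ 2 * t ^ 2) - a * (1 - t ^ 2) := by
      linear_combination -hc
    have h2 : (u - c) ^ 2 * (1 - a ^ 2 * t ^ 2) ^ 2 =
        (u * (1 - a ^ 2 * t ^ 2) - a * (1 - t ^ 2)) ^ 2 := by
      rw [← mul_pow, hcd]
    have hH : (0 : ℝ) ≤ (1 - a ^ 2 * t ^ 2) *
        (t ^ 2 * ((1 - a * u) ^ 2 + (a * v) ^ 2) - (((a : ℝ) - u) ^ 2 + v ^ 2)) :=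
      mul_nonneg hD.le (by linarith)
    nlinarith [h2, hH]
  calc ‖w - ((c : ℝ) : ℂ)‖
      = Real.sqrt (‖w - ((c : ℝ) : ℂ)‖ ^ 2) := (Real.sqrt_sq (norm_nonneg _)).symm
    _ ≤ Real.sqrt (((1 - a ^ 2) * t / (1 - a ^ 2 * t ^ 2)) ^ 2) := Real.sqrt_le_sqrt hgoal_sq
    _ = (1 - a ^ 2) * t / (1 - a ^ 2 * t ^ 2) := Real.sqrt_sq hr

/-- Euclidean form of the Schwarz–Pick inequality for `g(z) = ω(z)/z`, where `ω` is
an analytic self-map of the unit disc with `ω(0) = 0` and `ω'(0) = a ∈ (0,1]`: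
`|g(z) - a(1-|z|²)/(1-a²|z|²)| ≤ (1-a²)|z|/(1-a²|z|²)`. -/
theorem schwarz_pick_euclidean (ω g : ℂ → ℂ) (a : ℝ)
    (hω : DifferentiableOn ℂ ω (ball 0 1))
    (hmaps : MapsTo ω (ball 0 1) (ball 0 1))
    (h0 : ω 0 = 0)
    (hg : DifferentiableOn ℂ g (ball 0 1))
    (hfactor : ∀ z ∈ ball (0 : ℂ) 1, ω z = z * g z)
    (ha : 0 < a) (ha1 : a ≤ 1) (hderiv : deriv ω 0 = (a : ℂ)) :
    ∀ z ∈ ball (0 : ℂ) 1,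
      ‖g z - ((a * (1 - ‖z‖ ^ 2) / (1 - a ^ 2 * ‖z‖ ^ 2) : ℝ) : ℂ)‖ ≤
        (1 - a ^ 2) * ‖z‖ / (1 - a ^ 2 * ‖z‖ ^ 2) := by
  have h0mem : (0 : ℂ) ∈ ball (0 : ℂ) 1 := by simp
  have hopen : IsOpen (ball (0 : ℂ) 1) := isOpen_ball
  -- g 0 = a
  have hg0 : g 0 = (a : ℝ) := by
    have hgd : DifferentiableAt ℂ g 0 := hg.differentiableAt (hopen.mem_nhds h0mem)
    have heq : ω =ᶠ[nhds (0 : ℂ)] fun z => z * g z := by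
      filter_upwards [hopen.mem_nhds h0mem] with z hz using hfactor z hz
    have : deriv ω 0 = deriv (fun z => z * g z) 0 := heq.deriv_eq
    rw [hderiv] at this
    rw [deriv_fun_mul differentiableAt_fun_id hgd] at this
    simp at this
    exact this.symm
  -- ‖g z‖ ≤ 1 on the ball
  have hgle : ∀ z ∈ ball (0 : ℂ) 1, ‖g z‖ ≤ 1 := by
    intro z hz
    rcases eq_or_ne z 0 with rfl | hz0
    · rw [hg0, Complex.norm_real, Real.norm_eq_abs, abs_of_pos ha]
      exact ha1
    · have hsch : ‖ω z‖ ≤ ‖z‖ :=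
        Complex.norm_le_norm_of_mapsTo_ball hω (hmaps.mono_right ball_subset_closedBall) h0
          (mem_ball_zero_iff.mp hz)
      rw [hfactor z hz, norm_mul] at hsch
      have hzpos : 0 < ‖z‖ := by
        simpa [norm_pos_iff] using hz0
      calc ‖g z‖ = ‖g z‖ := rfl
        _ ≤ 1 := by
          rw [← mul_le_mul_iff_right₀ hzpos, mul_one]
          exact hsch
  intro z hz
  have htlt : ‖z‖ < 1 := mem_ball_zero_iff.mp hz
  have ha2 : a ^ 2 ≤ 1 := by nlinarith
  have ht2 : ‖z‖ ^ 2 < 1 := by nlinarith [norm_nonneg z]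
  have hD : (0 : ℝ) < 1 - a ^ 2 * ‖z‖ ^ 2 := by nlinarith [sq_nonneg ‖z‖]
  by_cases hlt : ∀ y ∈ ball (0 : ℂ) 1, ‖g y‖ < 1
  · -- Schwarz–Pick via Möbius transform
    set h : ℂ → ℂ := fun y => ((a : ℂ) - g y) / (1 - (a : ℂ) * g y) with hh
    have hden : ∀ y ∈ ball (0 : ℂ) 1, (1 - (a : ℂ) * g y) ≠ 0 := by
      intro y hy
      have hlt1 : ‖(a : ℂ) * g y‖ < 1 := by
        rw [norm_mul, Complex.norm_real, Real.norm_eq_abs, abs_of_pos ha]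
        calc a * ‖g y‖ ≤ 1 * ‖g y‖ :=
            mul_le_mul_of_nonneg_right ha1 (norm_nonneg _)
          _ < 1 := by simpa using hlt y hy
      intro hc
      have heq1 : (a : ℂ) * g y = 1 := by linear_combination -hc
      rw [heq1] at hlt1
      simp at hlt1
    have hhd : DifferentiableOn ℂ h (ball 0 1) := by
      apply DifferentiableOn.div
      · exact (differentiableOn_const _).sub hg
      · exact (differentiableOn_const _).sub ((differentiableOn_const _).mul hg)
      · exact hden
    have hh0 : h 0 = 0 := by
      simp [hh, hg0]
    have hhmaps : MapsTo h (ball 0 1) (ball 0 1) := by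
      intro y hy
      rw [mem_ball_zero_iff]
      have hgy := hlt y hy
      set w := g y with hw
      have hdeny : (1 - (a : ℂ) * w) ≠ 0 := hden y hy
      have hdenpos : 0 < ‖1 - (a : ℂ) * w‖ := norm_pos_iff.mpr hdeny
      rw [hh]
      simp only
      rw [norm_div, div_lt_one hdenpos]
      have e1 : ‖(a : ℂ) - w‖ ^ 2 = (a - w.re) ^ 2 + w.im ^ 2 := by
        rw [norm_sq_re_im]; simp
      have e2 : ‖1 - (a : ℂ) * w‖ ^ 2 = (1 - a * w.re) ^ 2 + (a * w.im) ^ 2 := by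
        rw [norm_sq_re_im]; simp
      have hw2 : w.re ^ 2 + w.im ^ 2 < 1 := by
        have hnw : ‖w‖ ^ 2 < 1 := by nlinarith [norm_nonneg w]
        rw [norm_sq_re_im] at hnw
        exact hnw
      have ha' : a < 1 := by
        have h00 := hlt 0 h0mem
        rw [hg0, Complex.norm_real, Real.norm_eq_abs, abs_of_pos ha] at h00
        exact h00
      have hsq : ‖(a : ℂ) - w‖ ^ 2 < ‖1 - (a : ℂ) * w‖ ^ 2 := by
        rw [e1, e2]
        nlinarith [mul_pos (mul_pos (sub_pos.mpr ha') (by linarith : (0:ℝ) < 1 + a))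
          (sub_pos.mpr hw2)]
      nlinarith [norm_nonneg ((a : ℂ) - w), norm_nonneg (1 - (a : ℂ) * w)]
    have hsch : ‖h z‖ ≤ ‖z‖ :=
      Complex.norm_le_norm_of_mapsTo_ball hhd (hhmaps.mono_right ball_subset_closedBall) hh0
        htlt
    have hSP : ‖(a : ℂ) - g z‖ ≤ ‖z‖ * ‖1 - (a : ℂ) * g z‖ := by
      have hdenz : (1 - (a : ℂ) * g z) ≠ 0 := hden z hz
      have hdenpos : 0 < ‖1 - (a : ℂ) * g z‖ := by
        simpa [norm_pos_iff] using norm_pos_iff.mpr hdenz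
      rw [hh] at hsch
      simp only at hsch
      rw [norm_div, div_le_iff₀ hdenpos] at hsch
      exact hsch
    exact schwarz_pick_algebra (g z) a ‖z‖ ha ha1 (norm_nonneg z) htlt hSP
  · -- maximum modulus case: g is constant, a = 1
    push_neg at hlt
    obtain ⟨z₀, hz₀, hge⟩ := hlt
    have heq1 : ‖g z₀‖ = 1 := le_antisymm (hgle z₀ hz₀) hge
    have hmax : IsMaxOn (norm ∘ g) (ball (0 : ℂ) 1) z₀ := by
      intro y hy
      simp only [Function.comp_apply, heq1]
      exact hgle y hy
    have hconst : EqOn g (Function.const ℂ (g z₀)) (ball (0 : ℂ) 1) :=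
      Complex.eqOn_of_isPreconnected_of_isMaxOn_norm
        (convex_ball (0 : ℂ) 1).isPreconnected hopen hg hz₀ hmax
    have hga : g z₀ = (a : ℝ) := by
      have := hconst h0mem
      rw [hg0] at this
      exact this.symm
    have ha1' : a = 1 := by
      have hn : ‖((a : ℝ) : ℂ)‖ = 1 := by rw [← hga]; exact heq1
      rw [Complex.norm_real, Real.norm_eq_abs, abs_of_pos ha] at hn
      exact hn
    have hgz : g z = 1 := by
      have := hconst hz
      rw [this, Function.const_apply, hga, ha1']
      norm_num
    rw [hgz, ha1']
    have hc1 : (1 : ℝ) * (1 - ‖z‖ ^ 2) / (1 - 1 ^ 2 * ‖z‖ ^ 2) = 1 := by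
      rw [one_mul, one_pow, one_mul]
      exact div_self (by nlinarith)
    rw [hc1]
    simp only [Complex.ofReal_one, sub_self, norm_zero]
    norm_num
end

section
/- Let ω : 𝔻 → 𝔻 be analytic with ω(0) = 0 and ω'(0) = σ ∈ (0,1). Then ω is injective on the disc 𝔻(0, ρ) where ρ = σ/(1 + √(1 - σ²)). -/
open Metric Set Function

set_option maxHeartbeats 1000000

local notation "conj'" => starRingEnd ℂ

noncomputable def mob (a z : ℂ) : ℂ := (z - a) / (1 - conj' a * z)

lemma mob_denom_ne {a z : ℂ} (h : ‖a‖ * ‖z‖ < 1) : (1 : ℂ) - conj' a * z ≠ 0 := by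
  intro hc
  rw [sub_eq_zero] at hc
  have h1 : ‖conj' a * z‖ < 1 := by
    rw [norm_mul, RCLike.norm_conj]; exact h
  rw [← hc] at h1
  simp at h1

lemma mob_normSq (a z : ℂ) :
    ‖(1:ℂ) - conj' a * z‖^2 - ‖z - a‖^2 = (1 - ‖a‖^2) * (1 - ‖z‖^2) := by
  have hn : ∀ w : ℂ, ‖w‖^2 = Complex.normSq w := fun w => by
    rw [Complex.sq_norm]
  simp only [hn, Complex.normSq_apply, Complex.sub_re, Complex.sub_im, Complex.mul_re,
    Complex.mul_im, Complex.one_re, Complex.one_im, Complex.conj_re, Complex.conj_im]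
  ring

lemma norm_mob_lt_one {a z : ℂ} (ha : ‖a‖ < 1) (hz : ‖z‖ < 1) : ‖mob a z‖ < 1 := by
  have hm : ‖a‖ * ‖z‖ < 1 := by nlinarith [norm_nonneg a, norm_nonneg z]
  have hdpos : 0 < ‖(1:ℂ) - conj' a * z‖ := norm_pos_iff.mpr (mob_denom_ne hm)
  rw [mob, norm_div, div_lt_one hdpos]
  have h1 : (0:ℝ) < 1 - ‖a‖^2 := by nlinarith [norm_nonneg a]
  have h2 : (0:ℝ) < 1 - ‖z‖^2 := by nlinarith [norm_nonneg z]
  have hsq : ‖z - a‖^2 < ‖(1:ℂ) - conj' a * z‖^2 := by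
    nlinarith [mob_normSq a z, mul_pos h1 h2]
  exact lt_of_pow_lt_pow_left₀ 2 (norm_nonneg _) hsq

lemma norm_mob_le_one {a z : ℂ} (ha : ‖a‖ < 1) (hz : ‖z‖ ≤ 1) : ‖mob a z‖ ≤ 1 := by
  have hm : ‖a‖ * ‖z‖ < 1 := by nlinarith [norm_nonneg a, norm_nonneg z]
  have hdpos : 0 < ‖(1:ℂ) - conj' a * z‖ := norm_pos_iff.mpr (mob_denom_ne hm)
  rw [mob, norm_div, div_le_one hdpos]
  have h1 : (0:ℝ) < 1 - ‖a‖^2 := by nlinarith [norm_nonneg a]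
  have h2 : (0:ℝ) ≤ 1 - ‖z‖^2 := by nlinarith [norm_nonneg z]
  have hsq : ‖z - a‖^2 ≤ ‖(1:ℂ) - conj' a * z‖^2 := by
    nlinarith [mob_normSq a z, mul_nonneg h1.le h2]
  exact le_of_pow_le_pow_left₀ two_ne_zero (norm_nonneg _) hsq

lemma mob_self (a : ℂ) : mob a a = 0 := by simp [mob]

lemma mob_zero (a : ℂ) : mob a 0 = -a := by simp [mob]

lemma mob_eq_zero {a z : ℂ} (h : ‖a‖ * ‖z‖ < 1) : mob a z = 0 ↔ z = a := by
  rw [mob, div_eq_zero_iff, sub_eq_zero]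
  simp [mob_denom_ne h]

lemma conj_mul_self_lt {a : ℂ} (ha : ‖a‖ < 1) : ‖conj' a * a‖ < 1 := by
  rw [norm_mul, RCLike.norm_conj]
  nlinarith [norm_nonneg a]

lemma one_sub_conj_mul_self_ne {a : ℂ} (ha : ‖a‖ < 1) : (1:ℂ) - conj' a * a ≠ 0 := by
  intro hc
  rw [sub_eq_zero] at hc
  have := conj_mul_self_lt ha
  rw [← hc] at this; simp at this

lemma norm_one_sub_conj_mul_self {a : ℂ} (ha : ‖a‖ ≤ 1) :
    ‖(1:ℂ) - conj' a * a‖ = 1 - ‖a‖^2 := by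
  have : conj' a * a = ((‖a‖^2 : ℝ) : ℂ) := by
    rw [mul_comm, Complex.mul_conj, Complex.normSq_eq_norm_sq]
  rw [this, ← Complex.ofReal_one, ← Complex.ofReal_sub, Complex.norm_real,
    Real.norm_eq_abs, abs_of_nonneg]
  nlinarith [norm_nonneg a]

lemma mob_mob {a z : ℂ} (ha : ‖a‖ < 1) (hz : ‖z‖ < 1) : mob (-a) (mob a z) = z := by
  have hm : ‖a‖ * ‖z‖ < 1 := by nlinarith [norm_nonneg a, norm_nonneg z]
  have h1 : (1:ℂ) - conj' a * z ≠ 0 := mob_denom_ne hm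
  have h2 : (1:ℂ) - conj' a * a ≠ 0 := one_sub_conj_mul_self_ne ha
  have e1 : (1:ℂ) + conj' a * mob a z = ((1:ℂ) - conj' a * a) / ((1:ℂ) - conj' a * z) := by
    rw [mob]; field_simp; ring
  have e2 : mob a z + a = z * (((1:ℂ) - conj' a * a) / ((1:ℂ) - conj' a * z)) := by
    rw [mob, div_add' _ _ _ h1, mul_div_assoc', div_left_inj' h1]; ring
  have h3 : (1:ℂ) + conj' a * mob a z ≠ 0 := by
    rw [e1]; exact div_ne_zero h2 h1
  have : mob (-a) (mob a z) = (mob a z + a) / ((1:ℂ) + conj' a * mob a z) := by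
    simp only [mob, map_neg, neg_mul, sub_neg_eq_add]
  rw [this, div_eq_iff h3, e2, e1]

lemma mob_hasDeriv {a z : ℂ} (h : (1:ℂ) - conj' a * z ≠ 0) :
    HasDerivAt (mob a) (((1:ℂ) - conj' a * a) / ((1:ℂ) - conj' a * z)^2) z := by
  have h1 : HasDerivAt (fun w : ℂ => w - a) 1 z := (hasDerivAt_id z).sub_const a
  have h2 : HasDerivAt (fun w : ℂ => (1:ℂ) - conj' a * w) (-(conj' a)) z := by
    simpa using ((hasDerivAt_id z).const_mul (conj' a)).const_sub (1:ℂ)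
  have h3 : HasDerivAt (fun w : ℂ => (w - a) / ((1:ℂ) - conj' a * w)) _ z := h1.div h2 h
  convert h3 using 1
  · rfl
  ring

lemma mob_hasDeriv_zero (a : ℂ) :
    HasDerivAt (mob a) ((1:ℂ) - conj' a * a) 0 := by
  have h : (1:ℂ) - conj' a * 0 ≠ 0 := by simp
  have := mob_hasDeriv h
  simpa using this

lemma mob_diffOn {a : ℂ} (ha : ‖a‖ < 1) : DifferentiableOn ℂ (mob a) (ball 0 1) := by
  intro z hz
  rw [mem_ball_zero_iff] at hz
  have hm : ‖a‖ * ‖z‖ < 1 := by nlinarith [norm_nonneg a, norm_nonneg z]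
  exact (mob_hasDeriv (mob_denom_ne hm)).differentiableAt.differentiableWithinAt

lemma mob_mapsTo {a : ℂ} (ha : ‖a‖ < 1) : MapsTo (mob a) (ball 0 1) (ball (0:ℂ) 1) := by
  intro z hz
  rw [mem_ball_zero_iff] at hz ⊢
  exact norm_mob_lt_one ha hz

/-- Maximum principle dichotomy on the unit ball. -/
lemma max_dichotomy {f : ℂ → ℂ} (hd : DifferentiableOn ℂ f (ball 0 1))
    (hb : ∀ z ∈ ball (0:ℂ) 1, ‖f z‖ ≤ 1) :
    (∀ z ∈ ball (0:ℂ) 1, ‖f z‖ < 1) ∨ EqOn f (fun _ => f 0) (ball (0:ℂ) 1) := by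
  by_cases h : ∀ z ∈ ball (0:ℂ) 1, ‖f z‖ < 1
  · exact Or.inl h
  · push_neg at h
    obtain ⟨z₀, hz₀, hge⟩ := h
    have hmax : IsMaxOn (norm ∘ f) (ball 0 1) z₀ := isMaxOn_iff.mpr fun z hz => by
      simpa using (hb z hz).trans hge
    have hcst := Complex.eqOn_of_isPreconnected_of_isMaxOn_norm
      (convex_ball (0:ℂ) 1).isPreconnected isOpen_ball hd hz₀ hmax
    have h00 : (0:ℂ) ∈ ball (0:ℂ) 1 := mem_ball_self one_pos
    refine Or.inr fun z hz => ?_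
    rw [hcst hz, hcst h00]
    rfl

/-- Schwarz–Pick derivative estimate at the origin. -/
lemma schwarz_pick_zero {f : ℂ → ℂ} (hd : DifferentiableOn ℂ f (ball 0 1))
    (hb : ∀ z ∈ ball (0:ℂ) 1, ‖f z‖ ≤ 1) :
    ‖deriv f 0‖ ≤ 1 - ‖f 0‖^2 := by
  have h00 : (0:ℂ) ∈ ball (0:ℂ) 1 := mem_ball_self one_pos
  rcases max_dichotomy hd hb with h | h
  · have ha : ‖f 0‖ < 1 := h 0 h00
    set a := f 0 with ha_def
    have hfd : DifferentiableAt ℂ f 0 := hd.differentiableAt (isOpen_ball.mem_nhds h00)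
    have hden : (1:ℂ) - conj' a * a ≠ 0 := one_sub_conj_mul_self_ne ha
    have hHder : HasDerivAt (fun z => mob a (f z))
        ((((1:ℂ) - conj' a * a) / ((1:ℂ) - conj' a * a)^2) * deriv f 0) 0 := by
      have hm : HasDerivAt (mob a) (((1:ℂ) - conj' a * a) / ((1:ℂ) - conj' a * a)^2) (f 0) := by
        have : (1:ℂ) - conj' a * (f 0) ≠ 0 := by rw [← ha_def]; exact hden
        exact mob_hasDeriv this
      exact hm.comp 0 hfd.hasDerivAt
    have hHd : DifferentiableOn ℂ (fun z => mob a (f z)) (ball 0 1) :=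
      (mob_diffOn ha).comp hd (fun z hz => by
        rw [mem_ball_zero_iff]; exact h z hz)
    have hmapsH : MapsTo (fun z => mob a (f z)) (ball 0 1)
        (ball ((fun z => mob a (f z)) 0) 1) := by
      intro z hz
      have h1 : mob a (f 0) = 0 := by rw [← ha_def]; exact mob_self a
      simp only [mem_ball, h1, dist_zero_right]
      exact norm_mob_lt_one ha (h z hz)
    have hbound := Complex.norm_deriv_le_div_of_mapsTo_ball hHd (hmapsH.mono_right ball_subset_closedBall) one_pos
    rw [hHder.deriv] at hbound
    have hsimp : (((1:ℂ) - conj' a * a) / ((1:ℂ) - conj' a * a)^2) = ((1:ℂ) - conj' a * a)⁻¹ := by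
      field_simp
    rw [hsimp, norm_mul, norm_inv, norm_one_sub_conj_mul_self ha.le] at hbound
    have hpos : (0:ℝ) < 1 - ‖a‖^2 := by nlinarith [norm_nonneg a]
    rw [inv_mul_le_iff₀ hpos] at hbound
    simpa using hbound
  · have : deriv f 0 = 0 := by
      have hev : f =ᶠ[nhds (0:ℂ)] (fun _ => f 0) := by
        filter_upwards [isOpen_ball.mem_nhds h00] with z hz using h hz
      rw [hev.deriv_eq]
      exact deriv_const 0 (f 0)
    rw [this, norm_zero]
    nlinarith [hb 0 h00, norm_nonneg (f 0)]

/-- Division by a Möbius factor. -/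
lemma mob_div {f : ℂ → ℂ} {a : ℂ} (ha : ‖a‖ < 1)
    (hd : DifferentiableOn ℂ f (ball 0 1))
    (hb : ∀ z ∈ ball (0:ℂ) 1, ‖f z‖ < 1) (hfa : f a = 0) :
    ∃ g : ℂ → ℂ, DifferentiableOn ℂ g (ball 0 1) ∧ (∀ z ∈ ball (0:ℂ) 1, ‖g z‖ ≤ 1) ∧
      ∀ z ∈ ball (0:ℂ) 1, f z = mob a z * g z := by
  have h00 : (0:ℂ) ∈ ball (0:ℂ) 1 := mem_ball_self one_pos
  have hna : ‖-a‖ < 1 := by rwa [norm_neg]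
  set h : ℂ → ℂ := fun z => f (mob (-a) z) with hdef
  have hh0 : h 0 = 0 := by
    rw [hdef]; simp only [mob_zero, neg_neg]; exact hfa
  have hhd : DifferentiableOn ℂ h (ball 0 1) := hd.comp (mob_diffOn hna) (mob_mapsTo hna)
  have hhmaps : MapsTo h (ball 0 1) (ball (h 0) 1) := by
    intro z hz
    rw [mem_ball, hh0, dist_zero_right]
    exact hb _ (mob_mapsTo hna hz)
  set k : ℂ → ℂ := dslope h 0 with hk
  have hkd : DifferentiableOn ℂ k (ball 0 1) :=
    (Complex.differentiableOn_dslope (isOpen_ball.mem_nhds h00)).mpr hhd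
  have hkb : ∀ z ∈ ball (0:ℂ) 1, ‖k z‖ ≤ 1 := by
    intro z hz
    have := Complex.norm_dslope_le_div_of_mapsTo_ball hhd (hhmaps.mono_right ball_subset_closedBall) hz
    simpa using this
  have hfact : ∀ w : ℂ, h w = w * k w := by
    intro w
    have := sub_smul_dslope h 0 w
    rw [hh0, sub_zero, sub_zero, smul_eq_mul] at this
    rw [← this, hk]
  refine ⟨fun z => k (mob a z), hkd.comp (mob_diffOn ha) (mob_mapsTo ha), ?_, ?_⟩
  · intro z hz
    exact hkb _ (mob_mapsTo ha hz)
  · intro z hz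
    rw [mem_ball_zero_iff] at hz
    have : f z = h (mob a z) := by rw [hdef]; simp only [mob_mob ha hz]
    rw [this, hfact]

/-- Landau's theorem: if `ω` is an analytic self-map of the unit disc with `ω(0) = 0`
and `ω'(0) = σ ∈ (0,1)`, then `ω` is injective on the disc of radius
`ρ = σ/(1 + √(1-σ²))`. -/
theorem landau_univalence (ω : ℂ → ℂ) (σ : ℝ)
    (hω : DifferentiableOn ℂ ω (ball 0 1))
    (hmaps : MapsTo ω (ball 0 1) (ball 0 1))
    (h0 : ω 0 = 0)
    (hσ0 : 0 < σ) (hσ1 : σ < 1) (hderiv : deriv ω 0 = (σ : ℂ)) :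
    InjOn ω (ball (0 : ℂ) (σ / (1 + Real.sqrt (1 - σ ^ 2)))) := by
  have h00 : (0:ℂ) ∈ ball (0:ℂ) 1 := mem_ball_self one_pos
  set ρ : ℝ := σ / (1 + Real.sqrt (1 - σ ^ 2)) with hρdef
  have hsq0 : 0 ≤ Real.sqrt (1 - σ^2) := Real.sqrt_nonneg _
  have hsq : Real.sqrt (1 - σ^2)^2 = 1 - σ^2 := Real.sq_sqrt (by nlinarith)
  have hden : (0:ℝ) < 1 + Real.sqrt (1 - σ^2) := by linarith
  have hρ0 : 0 < ρ := div_pos hσ0 hden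
  have hρ1 : ρ < 1 := by
    rw [hρdef, div_lt_one hden]
    linarith
  have hρσ : σ * (1 + ρ^2) = 2 * ρ := by
    rw [hρdef]
    field_simp
    linear_combination hsq
  intro z₁ hz₁ z₂ hz₂ heq
  by_contra hne
  rw [mem_ball_zero_iff] at hz₁ hz₂
  have hz₁1 : ‖z₁‖ < 1 := lt_trans hz₁ hρ1
  have hz₂1 : ‖z₂‖ < 1 := lt_trans hz₂ hρ1
  have hz₁b : z₁ ∈ ball (0:ℂ) 1 := mem_ball_zero_iff.2 hz₁1
  have hz₂b : z₂ ∈ ball (0:ℂ) 1 := mem_ball_zero_iff.2 hz₂1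
  set w : ℂ := ω z₁ with hwdef
  have hw1 : ‖w‖ < 1 := mem_ball_zero_iff.1 (hmaps hz₁b)
  set F : ℂ → ℂ := fun z => mob w (ω z) with hFdef
  have hFd : DifferentiableOn ℂ F (ball 0 1) := (mob_diffOn hw1).comp hω hmaps
  have hFb : ∀ z ∈ ball (0:ℂ) 1, ‖F z‖ < 1 := fun z hz =>
    norm_mob_lt_one hw1 (mem_ball_zero_iff.1 (hmaps hz))
  have hFz₁ : F z₁ = 0 := mob_self w
  have hFz₂ : F z₂ = 0 := by
    show mob w (ω z₂) = 0
    rw [← heq]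
    exact mob_self w
  obtain ⟨g, hgd, hgb, hgf⟩ := mob_div hz₁1 hFd hFb hFz₁
  have hgz₂ : g z₂ = 0 := by
    have h1 := hgf z₂ hz₂b
    rw [hFz₂] at h1
    have hmne : mob z₁ z₂ ≠ 0 := by
      rw [Ne, mob_eq_zero (by nlinarith [norm_nonneg z₁, norm_nonneg z₂])]
      exact fun h => hne ((hne <| id h.symm).elim)
    exact (mul_eq_zero.mp h1.symm).resolve_left hmne
  rcases max_dichotomy hgd hgb with hstrict | hconst
  · -- strict case: second division
    obtain ⟨G, hGd, hGb, hGg⟩ := mob_div hz₂1 hgd hstrict hgz₂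
    have hFfact : ∀ z ∈ ball (0:ℂ) 1, F z = mob z₁ z * (mob z₂ z * G z) := fun z hz => by
      rw [hgf z hz, hGg z hz]
    -- value at 0
    have hF0 : F 0 = -w := by
      show mob w (ω 0) = -w
      rw [h0, mob_zero]
    have hF0' : -w = -z₁ * (-z₂ * G 0) := by
      rw [← hF0, hFfact 0 h00, mob_zero, mob_zero]
    -- derivative, first computation
    have hωd0 : HasDerivAt ω ((σ:ℝ):ℂ) 0 := by
      have h1 := (hω.differentiableAt (isOpen_ball.mem_nhds h00)).hasDerivAt
      rwa [hderiv] at h1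
    have hderA : HasDerivAt F (((1:ℂ) - conj' w * w) * σ) 0 := by
      have hm : HasDerivAt (mob w) ((1:ℂ) - conj' w * w) (ω 0) := by
        rw [h0]; exact mob_hasDeriv_zero w
      exact hm.comp 0 hωd0
    -- derivative, second computation
    have hG0d : HasDerivAt G (deriv G 0) 0 :=
      (hGd.differentiableAt (isOpen_ball.mem_nhds h00)).hasDerivAt
    have hderB : HasDerivAt (fun z => mob z₁ z * (mob z₂ z * G z))
        (((1:ℂ) - conj' z₁ * z₁) * (mob z₂ 0 * G 0) +
          mob z₁ 0 * (((1:ℂ) - conj' z₂ * z₂) * G 0 + mob z₂ 0 * deriv G 0)) 0 :=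
      (mob_hasDeriv_zero z₁).mul ((mob_hasDeriv_zero z₂).mul hG0d)
    have hFev : F =ᶠ[nhds (0:ℂ)] (fun z => mob z₁ z * (mob z₂ z * G z)) := by
      filter_upwards [isOpen_ball.mem_nhds h00] with z hz using hFfact z hz
    have hkey : ((1:ℂ) - conj' w * w) * σ =
        ((1:ℂ) - conj' z₁ * z₁) * (-z₂ * G 0) +
          -z₁ * (((1:ℂ) - conj' z₂ * z₂) * G 0 + -z₂ * deriv G 0) := by
      have e1 := hderA.deriv
      have e2 := hderB.deriv
      have e3 := hFev.deriv_eq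
      rw [← e1, e3, e2, mob_zero, mob_zero]
    -- norms
    have ht1 : ‖G 0‖ ≤ 1 := hGb 0 h00
    have hwrt : ‖w‖ = ‖z₁‖ * (‖z₂‖ * ‖G 0‖) := by
      have := congrArg norm hF0'
      simpa [norm_mul] using this
    have hGder : ‖deriv G 0‖ ≤ 1 - ‖G 0‖^2 := schwarz_pick_zero hGd hGb
    have hmaster : σ * (1 - ‖w‖^2) ≤
        (1 - ‖z₁‖^2) * (‖z₂‖ * ‖G 0‖) +
          ‖z₁‖ * ((1 - ‖z₂‖^2) * ‖G 0‖ + ‖z₂‖ * (1 - ‖G 0‖^2)) := by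
      have hl : ‖((1:ℂ) - conj' w * w) * (σ:ℂ)‖ = σ * (1 - ‖w‖^2) := by
        rw [norm_mul, norm_one_sub_conj_mul_self hw1.le, Complex.norm_real,
          Real.norm_eq_abs, abs_of_pos hσ0]
        ring
      have h1 : σ * (1 - ‖w‖^2) = ‖((1:ℂ) - conj' z₁ * z₁) * (-z₂ * G 0) +
          -z₁ * (((1:ℂ) - conj' z₂ * z₂) * G 0 + -z₂ * deriv G 0)‖ := by
        rw [← hl, hkey]
      have h2 := norm_add_le (((1:ℂ) - conj' z₁ * z₁) * (-z₂ * G 0))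
        (-z₁ * (((1:ℂ) - conj' z₂ * z₂) * G 0 + -z₂ * deriv G 0))
      have e1 : ‖((1:ℂ) - conj' z₁ * z₁) * (-z₂ * G 0)‖ =
          (1 - ‖z₁‖^2) * (‖z₂‖ * ‖G 0‖) := by
        rw [norm_mul, norm_mul, norm_neg, norm_one_sub_conj_mul_self hz₁1.le]
      have e2 : ‖-z₁ * (((1:ℂ) - conj' z₂ * z₂) * G 0 + -z₂ * deriv G 0)‖ ≤
          ‖z₁‖ * ((1 - ‖z₂‖^2) * ‖G 0‖ + ‖z₂‖ * (1 - ‖G 0‖^2)) := by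
        rw [norm_mul, norm_neg]
        refine mul_le_mul_of_nonneg_left ?_ (norm_nonneg z₁)
        refine (norm_add_le _ _).trans ?_
        rw [norm_mul, norm_mul, norm_neg, norm_one_sub_conj_mul_self hz₂1.le]
        linarith [mul_le_mul_of_nonneg_left hGder (norm_nonneg z₂)]
      linarith [h1, h2, e1, e2]
    -- final real arithmetic
    have hr₁0 : 0 ≤ ‖z₁‖ := norm_nonneg z₁
    have hr₂0 : 0 ≤ ‖z₂‖ := norm_nonneg z₂
    have ht0 : 0 ≤ ‖G 0‖ := norm_nonneg (G 0)
    rw [hwrt] at hmaster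
    have hp : ‖z₁‖ * ‖z₂‖ < ρ^2 := by nlinarith
    have hρρ : ρ^2 < ρ := by nlinarith
    have hp1 : ‖z₁‖ * ‖z₂‖ < 1 := by nlinarith
    have hA : 0 < σ * (1 + (‖z₁‖*‖z₂‖)^2) - 2*(‖z₁‖*‖z₂‖) := by
      have hid : (1 + ρ^2) * (σ * (1 + (‖z₁‖*‖z₂‖)^2) - 2*(‖z₁‖*‖z₂‖)) =
          2*((ρ - ‖z₁‖*‖z₂‖)*(1 - ρ*(‖z₁‖*‖z₂‖))) := by
        linear_combination (1 + (‖z₁‖*‖z₂‖)^2) * hρσ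
      have c1 : 0 < ρ - ‖z₁‖*‖z₂‖ := by linarith
      have c2 : 0 < 1 - ρ*(‖z₁‖*‖z₂‖) := by
        linarith [mul_le_mul_of_nonneg_right hρ1.le (mul_nonneg hr₁0 hr₂0)]
      have hpos : 0 < 2*((ρ - ‖z₁‖*‖z₂‖)*(1 - ρ*(‖z₁‖*‖z₂‖))) := by
        have := mul_pos c1 c2
        linarith
      nlinarith [sq_nonneg ρ]
    have hB : 0 < σ * (1 + ‖z₁‖*‖z₂‖) - (‖z₁‖ + ‖z₂‖) := by
      have hid : (1 + ρ^2) * (σ * (1 + ‖z₁‖*‖z₂‖) - (‖z₁‖ + ‖z₂‖)) =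
          (ρ - ‖z₁‖)*(1 - ρ*‖z₂‖) + (ρ - ‖z₂‖)*(1 - ρ*‖z₁‖) := by
        linear_combination (1 + ‖z₁‖*‖z₂‖) * hρσ
      have c3 : 0 < ρ - ‖z₁‖ := by linarith
      have c4 : 0 < 1 - ρ*‖z₂‖ := by linarith [mul_le_mul_of_nonneg_right hρ1.le hr₂0]
      have c5 : 0 < ρ - ‖z₂‖ := by linarith
      have c6 : 0 < 1 - ρ*‖z₁‖ := by linarith [mul_le_mul_of_nonneg_right hρ1.le hr₁0]
      have hpos : 0 < (ρ - ‖z₁‖)*(1 - ρ*‖z₂‖) + (ρ - ‖z₂‖)*(1 - ρ*‖z₁‖) :=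
        add_pos (mul_pos c3 c4) (mul_pos c5 c6)
      nlinarith [sq_nonneg ρ]
    have hterm2 : 0 ≤ (1-‖G 0‖)^2 * ((‖z₁‖*‖z₂‖) * (1 - σ*(‖z₁‖*‖z₂‖))) :=
      mul_nonneg (sq_nonneg _) (mul_nonneg (mul_nonneg hr₁0 hr₂0) (by nlinarith))
    by_cases ht : ‖G 0‖ < 1
    · have hterm1 : 0 < (1-‖G 0‖) * (σ * (1 + (‖z₁‖*‖z₂‖)^2) - 2*(‖z₁‖*‖z₂‖)) :=
        mul_pos (by linarith) hA
      have hterm3 : 0 ≤ (‖G 0‖ * (1 - ‖z₁‖*‖z₂‖)) * (σ * (1 + ‖z₁‖*‖z₂‖) - (‖z₁‖ + ‖z₂‖)) :=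
        mul_nonneg (mul_nonneg ht0 (by linarith)) hB.le
      nlinarith [hmaster, hterm1, hterm2, hterm3]
    · have hteq : ‖G 0‖ = 1 := le_antisymm ht1 (not_lt.1 ht)
      have hterm3 : 0 < (1 - ‖z₁‖*‖z₂‖) * (σ * (1 + ‖z₁‖*‖z₂‖) - (‖z₁‖ + ‖z₂‖)) :=
        mul_pos (by linarith) hB
      rw [hteq] at hmaster
      nlinarith [hmaster, hterm3]
  · -- constant case
    have hg0 : g 0 = 0 := (hconst hz₂b).symm.trans hgz₂
    have hωc : ∀ z ∈ ball (0:ℂ) 1, ω z = w := by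
      intro z hz
      have hFz : F z = 0 := by rw [hgf z hz, hconst hz, hg0, mul_zero]
      have hoz : ‖ω z‖ < 1 := mem_ball_zero_iff.1 (hmaps hz)
      exact (mob_eq_zero (by nlinarith [norm_nonneg w, norm_nonneg (ω z)])).1 hFz
    have hd0 : deriv ω 0 = 0 := by
      have hev : ω =ᶠ[nhds (0:ℂ)] (fun _ => w) := by
        filter_upwards [isOpen_ball.mem_nhds h00] with z hz using hωc z hz
      rw [hev.deriv_eq]
      exact deriv_const 0 w
    rw [hd0] at hderiv
    have : σ = 0 := by exact_mod_cast hderiv.symm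
    linarith
end

section
/- Let {ω_{s,t}}_{(s,t): s≤t, s,t∈I} be a transition family on an interval I: each ω_{s,t} : 𝔻 → 𝔻 is analytic with ω_{s,t}(0)=0, ω_{s,t}'(0) > 0, ω_{t,t} = id, and ω_{t₁,t₂} ∘ ω_{t₀,t₁} = ω_{t₀,t₂} for t₀ ≤ t₁ ≤ t₂. Set a_{s,t} = ω_{s,t}'(0). Then for t₀ < t₁ < t₂ in I and z ∈ 𝔻, |ω_{t₀,t₂}(z) - ω_{t₀,t₁}(z)| ≤ (1 - a_{t₁,t₂}) · |z|(1+|z|)/(1 - a_{t₁,t₂}|z|). -/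
open Metric Set Function Filter

/-- Schwarz lemma with closed bound on values. -/
lemma schwarz_closed {f : ℂ → ℂ} (hd : DifferentiableOn ℂ f (ball 0 1))
    (hb : ∀ w ∈ ball (0:ℂ) 1, ‖f w‖ ≤ 1) (h0 : f 0 = 0) {z : ℂ} (hz : z ∈ ball (0:ℂ) 1) :
    ‖f z‖ ≤ ‖z‖ := by
  have key : ‖dslope f 0 z‖ ≤ 1 := by
    have hlim : ∀ᶠ r in nhdsWithin (1:ℝ) (Set.Iio 1), ‖dslope f 0 z‖ ≤ 1 / r := by
      rw [mem_ball] at hz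
      filter_upwards [Ioo_mem_nhdsLT_of_mem ⟨hz, le_rfl⟩] with r hr
      have hr₀ : 0 < r := dist_nonneg.trans_lt hr.1
      have hd' : DiffContOnCl ℂ (dslope f 0) (ball 0 r) := by
        refine DifferentiableOn.diffContOnCl ?_
        rw [closure_ball (0:ℂ) hr₀.ne']
        exact ((Complex.differentiableOn_dslope <| ball_mem_nhds _ one_pos).mpr hd).mono
          (closedBall_subset_ball hr.2)
      refine Complex.norm_le_of_forall_mem_frontier_norm_le isBounded_ball hd' ?_ ?_
      · rw [frontier_ball (0:ℂ) hr₀.ne']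
        intro w hw
        have hw' : w ≠ 0 := ne_of_mem_sphere hw hr₀.ne'
        rw [dslope_of_ne _ hw', slope_def_module, norm_smul, norm_inv, sub_zero, h0, sub_zero,
          ← div_eq_inv_mul]
        have hwn : ‖w‖ = r := mem_sphere_zero_iff_norm.1 hw
        rw [hwn, div_le_div_iff_of_pos_right hr₀]
        exact hb w (mem_ball_zero_iff.2 (hwn ▸ hr.2))
      · rw [closure_ball (0:ℂ) hr₀.ne', mem_closedBall]
        exact hr.1.le
    have : Filter.Tendsto (fun r : ℝ => 1 / r) (nhdsWithin (1:ℝ) (Set.Iio 1))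
        (nhds (1/1)) :=
      (tendsto_const_nhds.div tendsto_id one_ne_zero).mono_left nhdsWithin_le_nhds
    have := ge_of_tendsto this hlim
    simpa using this
  rcases eq_or_ne z 0 with rfl | hz0
  · simp [h0]
  · have : f z = z * dslope f 0 z := by
      rw [dslope_of_ne _ hz0, slope_def_module, h0, sub_zero, sub_zero, smul_eq_mul]
      field_simp
    rw [this, norm_mul]
    calc ‖z‖ * ‖dslope f 0 z‖ ≤ ‖z‖ * 1 := by
          exact mul_le_mul_of_nonneg_left key (norm_nonneg _)
      _ = ‖z‖ := mul_one _

lemma key_estimate {f : ℂ → ℂ} (hd : DifferentiableOn ℂ f (ball 0 1))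
    (hm : MapsTo f (ball 0 1) (ball 0 1)) (h0 : f 0 = 0)
    (him : (deriv f 0).im = 0) (hre : 0 < (deriv f 0).re) {z : ℂ} (hz : z ∈ ball (0:ℂ) 1) :
    ‖f z - z‖ ≤ (1 - (deriv f 0).re) * (‖z‖ * (1 + ‖z‖)) / (1 - (deriv f 0).re * ‖z‖) := by
  set a : ℝ := (deriv f 0).re with ha_def
  have hα : deriv f 0 = (a : ℂ) := Complex.ext rfl him
  have hz1 : ‖z‖ < 1 := mem_ball_zero_iff.1 hz
  have ha1 : a ≤ 1 := by
    have := Complex.norm_deriv_le_one_of_mapsTo_ball hd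
      (by rw [h0]; exact hm.mono_right ball_subset_closedBall) one_pos
    have h2 := Complex.re_le_norm (deriv f 0)
    linarith
  have hm' : MapsTo f (ball 0 1) (ball (f 0) 1) := by rwa [h0]
  have har : a * ‖z‖ < 1 := by nlinarith [norm_nonneg z]
  rcases eq_or_lt_of_le ha1 with ha1' | ha1'
  · -- a = 1 : equality case of Schwarz, f = id on the ball
    have heq : ‖dslope f 0 0‖ = 1 / 1 := by
      rw [dslope_same, hα, ha1']
      norm_num
    have := Complex.affine_of_mapsTo_ball_of_exists_norm_dslope_eq_div hd (hm'.mono_right ball_subset_closedBall)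
      (mem_ball_self one_pos) heq hz
    rw [dslope_same, hα, ha1'] at this
    simp only [h0, sub_zero, zero_add, Complex.ofReal_one, smul_eq_mul, mul_one] at this
    rw [this, sub_self, norm_zero, ha1']
    simp
  · -- a < 1
    set g : ℂ → ℂ := dslope f 0 with hg_def
    have hg_diff : DifferentiableOn ℂ g (ball 0 1) :=
      (Complex.differentiableOn_dslope (ball_mem_nhds _ one_pos)).mpr hd
    have hg_le : ∀ w ∈ ball (0:ℂ) 1, ‖g w‖ ≤ 1 := fun w hw => by
      simpa using Complex.norm_dslope_le_div_of_mapsTo_ball hd (hm'.mono_right ball_subset_closedBall) hw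
    have hg0 : g 0 = (a : ℂ) := by rw [hg_def, dslope_same, hα]
    -- denominator nonzero
    have hden : ∀ w ∈ ball (0:ℂ) 1, (1 : ℂ) - (a : ℂ) * g w ≠ 0 := by
      intro w hw h
      have : ‖(a : ℂ) * g w‖ = 1 := by
        have : (a : ℂ) * g w = 1 := by linear_combination -h
        rw [this, norm_one]
      rw [norm_mul, Complex.norm_real, Real.norm_eq_abs, abs_of_pos hre] at this
      nlinarith [hg_le w hw, norm_nonneg (g w)]
    set F : ℂ → ℂ := fun w => (g w - (a : ℂ)) / (1 - (a : ℂ) * g w) with hF_def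
    have hF_diff : DifferentiableOn ℂ F (ball 0 1) :=
      (hg_diff.sub_const _).div ((differentiableOn_const _).sub
        ((differentiableOn_const _).mul hg_diff)) hden
    have hF0 : F 0 = 0 := by simp [hF_def, hg0]
    have hF_le : ∀ w ∈ ball (0:ℂ) 1, ‖F w‖ ≤ 1 := by
      intro w hw
      have hu := hg_le w hw
      set u := g w
      have hnum : ‖u - (a : ℂ)‖ ≤ ‖1 - (a : ℂ) * u‖ := by
        have hu2 : u.re ^ 2 + u.im ^ 2 ≤ 1 := by
          have h3 : Complex.normSq u ≤ 1 := by
            rw [← Complex.sq_norm]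
            nlinarith [norm_nonneg u]
          simpa [Complex.normSq_apply, sq] using h3
        have h1 : ‖u - (a : ℂ)‖ ^ 2 ≤ ‖1 - (a : ℂ) * u‖ ^ 2 := by
          rw [Complex.sq_norm, Complex.sq_norm]
          simp only [Complex.normSq_apply, Complex.sub_re, Complex.sub_im, Complex.mul_re,
            Complex.mul_im, Complex.one_re, Complex.one_im, Complex.ofReal_re,
            Complex.ofReal_im]
          nlinarith [mul_nonneg (by nlinarith : (0:ℝ) ≤ 1 - a ^ 2)
            (by linarith : (0:ℝ) ≤ 1 - (u.re ^ 2 + u.im ^ 2))]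
        nlinarith [norm_nonneg (u - (a:ℂ)), norm_nonneg (1 - (a:ℂ)*u)]
      rw [hF_def]
      simp only [norm_div]
      exact div_le_one_of_le₀ hnum (norm_nonneg _)
    have hFz : ‖F z‖ ≤ ‖z‖ := schwarz_closed hF_diff hF_le hF0 hz
    -- unpack: ‖g z − a‖ ≤ ‖z‖ ‖1 − a g z‖
    have hYD : ‖g z - (a : ℂ)‖ ≤ ‖z‖ * ‖1 - (a : ℂ) * g z‖ := by
      have := hFz
      rw [hF_def] at this
      simp only [norm_div] at this
      rwa [div_le_iff₀ (norm_pos_iff.2 (hden z hz))] at this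
    have hD : ‖1 - (a : ℂ) * g z‖ ≤ (1 - a) + a * ‖g z - 1‖ := by
      have : (1 : ℂ) - (a : ℂ) * g z = ((1 - a : ℝ) : ℂ) + (a : ℂ) * (1 - g z) := by
        push_cast; ring
      rw [this]
      refine (norm_add_le _ _).trans ?_
      rw [norm_mul, Complex.norm_real, Complex.norm_real, Real.norm_eq_abs, Real.norm_eq_abs,
        abs_of_nonneg (by linarith), abs_of_pos hre, norm_sub_rev]
    have hX : ‖g z - 1‖ ≤ ‖g z - (a : ℂ)‖ + (1 - a) := by
      have h1 : (g z - 1 : ℂ) = (g z - (a:ℂ)) + ((a : ℂ) - 1) := by ring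
      have h2 : ‖(a : ℂ) - 1‖ = 1 - a := by
        rw [show ((a : ℂ) - 1) = (((a - 1 : ℝ)) : ℂ) by push_cast; ring, Complex.norm_real,
          Real.norm_eq_abs, abs_of_nonpos (by linarith)]
        ring
      rw [h1]
      exact (norm_add_le _ _).trans (by rw [h2])
    -- combine
    set X := ‖g z - (1:ℂ)‖
    set Y := ‖g z - (a:ℂ)‖
    set r := ‖z‖
    have hr0 : (0:ℝ) ≤ r := norm_nonneg z
    have hXbound : X * (1 - a * r) ≤ (1 - a) * (1 + r) := by
      nlinarith [hYD, hD, hX, norm_nonneg (1 - (a:ℂ) * g z)]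
    have hfz : f z - z = z * (g z - 1) := by
      rcases eq_or_ne z 0 with rfl | hz0
      · simp [h0]
      · rw [hg_def, dslope_of_ne _ hz0, slope_def_module, h0, sub_zero, sub_zero, smul_eq_mul]
        field_simp
    rw [hfz, norm_mul]
    have hgoal : r * X * (1 - a * r) ≤ (1 - a) * (r * (1 + r)) := by nlinarith
    rw [show ‖z‖ * ‖g z - 1‖ = r * X from rfl,
      le_div_iff₀ (by linarith : (0:ℝ) < 1 - a * ‖z‖)]
    linarith [hgoal]

lemma mono_bound {a r s : ℝ} (ha0 : 0 < a) (ha1 : a ≤ 1) (hr0 : 0 ≤ r) (hrs : r ≤ s)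
    (hs1 : s < 1) :
    (1 - a) * (r * (1 + r)) / (1 - a * r) ≤ (1 - a) * (s * (1 + s)) / (1 - a * s) := by
  have hs0 : 0 ≤ s := hr0.trans hrs
  have h1 : 0 < 1 - a * r := by nlinarith
  have h2 : 0 < 1 - a * s := by nlinarith
  rw [div_le_div_iff₀ h1 h2]
  have h3 : 0 ≤ (1 - a) * ((s - r) * (1 + r + s - a * r * s)) := by
    have : a * r * s ≤ 1 := by nlinarith
    have : 0 ≤ 1 + r + s - a * r * s := by nlinarith
    have : 0 ≤ (s - r) * (1 + r + s - a * r * s) :=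
      mul_nonneg (by linarith) this
    exact mul_nonneg (by linarith) this
  nlinarith [h3]

open Metric Set

/-- Lipschitz-type estimate for a transition family `{ω_{s,t}}` on an interval `I`:
for `t₀ < t₁ < t₂` and `z` in the unit disc,
`|ω_{t₀,t₂}(z) - ω_{t₀,t₁}(z)| ≤ (1 - a_{t₁,t₂})·|z|(1+|z|)/(1 - a_{t₁,t₂}|z|)`,
where `a_{s,t} = ω_{s,t}'(0)`. -/
theorem transition_family_lipschitz (I : Set ℝ) (hI : I.OrdConnected)
    (ω : ℝ → ℝ → ℂ → ℂ)
    (hdiff : ∀ s ∈ I, ∀ t ∈ I, s ≤ t → DifferentiableOn ℂ (ω s t) (ball 0 1))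
    (hmaps : ∀ s ∈ I, ∀ t ∈ I, s ≤ t → MapsTo (ω s t) (ball 0 1) (ball 0 1))
    (h0 : ∀ s ∈ I, ∀ t ∈ I, s ≤ t → ω s t 0 = 0)
    (hderiv : ∀ s ∈ I, ∀ t ∈ I, s ≤ t →
      (deriv (ω s t) 0).im = 0 ∧ 0 < (deriv (ω s t) 0).re)
    (hid : ∀ t ∈ I, ∀ z ∈ ball (0 : ℂ) 1, ω t t z = z)
    (hcomp : ∀ t₀ ∈ I, ∀ t₁ ∈ I, ∀ t₂ ∈ I, t₀ ≤ t₁ → t₁ ≤ t₂ →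
      ∀ z ∈ ball (0 : ℂ) 1, ω t₁ t₂ (ω t₀ t₁ z) = ω t₀ t₂ z) :
    ∀ t₀ ∈ I, ∀ t₁ ∈ I, ∀ t₂ ∈ I, t₀ < t₁ → t₁ < t₂ → ∀ z ∈ ball (0 : ℂ) 1,
      ‖ω t₀ t₂ z - ω t₀ t₁ z‖ ≤
        (1 - (deriv (ω t₁ t₂) 0).re) * (‖z‖ * (1 + ‖z‖)) /
          (1 - (deriv (ω t₁ t₂) 0).re * ‖z‖) := by
  intro t₀ ht₀ t₁ ht₁ t₂ ht₂ h01 h12 z hz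
  have hz1 : ‖z‖ < 1 := mem_ball_zero_iff.1 hz
  set w : ℂ := ω t₀ t₁ z with hw_def
  have hw : w ∈ ball (0:ℂ) 1 := hmaps t₀ ht₀ t₁ ht₁ h01.le hz
  have hw1 : ‖w‖ < 1 := mem_ball_zero_iff.1 hw
  have hcompz : ω t₀ t₂ z = ω t₁ t₂ w :=
    (hcomp t₀ ht₀ t₁ ht₁ t₂ ht₂ h01.le h12.le z hz).symm
  have hd12 := hdiff t₁ ht₁ t₂ ht₂ h12.le
  have hm12 := hmaps t₁ ht₁ t₂ ht₂ h12.le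
  have h012 := h0 t₁ ht₁ t₂ ht₂ h12.le
  obtain ⟨him, hre⟩ := hderiv t₁ ht₁ t₂ ht₂ h12.le
  set a : ℝ := (deriv (ω t₁ t₂) 0).re with ha_def
  have ha1 : a ≤ 1 := by
    have h1 := Complex.norm_deriv_le_one_of_mapsTo_ball hd12
      (by rw [h012]; exact hm12.mono_right ball_subset_closedBall) one_pos
    have h2 := Complex.re_le_norm (deriv (ω t₁ t₂) 0)
    linarith
  -- Schwarz: ‖w‖ ≤ ‖z‖
  have hwz : ‖w‖ ≤ ‖z‖ := by
    rw [hw_def]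
    exact Complex.norm_le_norm_of_mapsTo_ball (hdiff t₀ ht₀ t₁ ht₁ h01.le)
      ((hmaps t₀ ht₀ t₁ ht₁ h01.le).mono_right ball_subset_closedBall) (h0 t₀ ht₀ t₁ ht₁ h01.le)
      hz1
  have hkey := key_estimate hd12 hm12 h012 him hre hw
  rw [hcompz]
  calc ‖ω t₁ t₂ w - w‖ ≤ (1 - a) * (‖w‖ * (1 + ‖w‖)) / (1 - a * ‖w‖) := hkey
    _ ≤ (1 - a) * (‖z‖ * (1 + ‖z‖)) / (1 - a * ‖z‖) :=
        mono_bound hre ha1 (norm_nonneg w) hwz hz1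
end

section
/- Let {ω_{s,t}} be a transition family on an interval I such that the map (s,t) ↦ ω_{s,t} is continuous in the topology of locally uniform convergence on 𝔻 (equivalently, a_{s,t} = ω_{s,t}'(0) is continuous). Then ω_{s,t} is injective on 𝔻 for every s ≤ t in I. -/
open Metric Set

section Aux
open Complex

/-- Pick-type bound: if `f` maps the unit disc to itself fixing `0` with derivative `a` at `0`
(`a` real, positive), then `‖f z - a z‖ ≤ 2 (1 - a) ‖z‖² / (1 - ‖z‖)`. -/
lemma pick_bound {f : ℂ → ℂ} (hd : DifferentiableOn ℂ f (ball 0 1))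
    (hm : MapsTo f (ball 0 1) (ball 0 1)) (h0 : f 0 = 0)
    (him : (deriv f 0).im = 0) {z : ℂ} (hz : z ∈ ball (0:ℂ) 1) :
    ‖f z - deriv f 0 * z‖ ≤ 2 * (1 - (deriv f 0).re) * ‖z‖ ^ 2 / (1 - ‖z‖) := by
  set a : ℝ := (deriv f 0).re with ha
  have hmaps' : MapsTo f (ball 0 1) (ball (f 0) 1) := by rwa [h0]
  set h : ℂ → ℂ := dslope f 0 with hh
  have hdh : DifferentiableOn ℂ h (ball 0 1) :=
    (differentiableOn_dslope (ball_mem_nhds _ one_pos)).mpr hd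
  have hhb : ∀ w ∈ ball (0:ℂ) 1, ‖h w‖ ≤ 1 := fun w hw => by
    simpa using norm_dslope_le_div_of_mapsTo_ball hd (hmaps'.mono_right ball_subset_closedBall) hw
  have hh0 : h 0 = deriv f 0 := dslope_same f 0
  have hh0' : h 0 = (a : ℂ) := by
    rw [hh0]; exact Complex.ext rfl him
  have ha1 : a ≤ 1 := by
    have := hhb 0 (mem_ball_self one_pos)
    rw [hh0'] at this
    simpa using le_trans (le_abs_self a) (by simpa using this)
  have hfz : f z = z * h z := by
    rcases eq_or_ne z 0 with rfl | hne
    · simp [h0]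
    · rw [hh, dslope_of_ne _ hne, slope_def_field]
      field_simp [h0]
      rw [h0, sub_zero, sub_zero, mul_comm]
  have hzlt : ‖z‖ < 1 := by simpa using hz
  -- reduce to bound on ‖h z - a‖
  have key : ‖h z - (a:ℂ)‖ ≤ 2 * (1 - a) * ‖z‖ / (1 - ‖z‖) := by
    rcases eq_or_lt_of_le ha1 with hae | halt
    · -- a = 1 : h attains max modulus at 0, so h ≡ 1
      have hmax : IsMaxOn (norm ∘ h) (ball (0:ℂ) 1) 0 := by
        intro w hw
        simp only [Function.comp_apply, hh0', ← hae]
        simpa [hae] using hhb w hw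
      have := eqOn_of_isPreconnected_of_isMaxOn_norm (convex_ball (0:ℂ) 1).isPreconnected
        isOpen_ball hdh (mem_ball_self one_pos) hmax hz
      rw [this, hh0', ← hae]
      simp [div_nonneg, sub_nonneg, hzlt.le]
    · -- a < 1 : Cayley transform argument
      set b : ℝ := 1 - a with hb
      have hbpos : 0 < b := by simp [hb]; linarith
      set k : ℂ → ℂ := fun w => 1 - h w with hk
      have hkre : ∀ w ∈ ball (0:ℂ) 1, 0 ≤ (k w).re := by
        intro w hw
        have : (h w).re ≤ 1 := le_trans (Complex.re_le_norm _) (hhb w hw)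
        simp [hk]; linarith
      have hden : ∀ w ∈ ball (0:ℂ) 1, k w + (b:ℂ) ≠ 0 := by
        intro w hw hcon
        have : (k w + (b:ℂ)).re = 0 := by rw [hcon]; simp
        simp only [Complex.add_re, Complex.ofReal_re] at this
        have := hkre w hw
        linarith
      set K : ℂ → ℂ := fun w => (k w - b) / (k w + b) with hK
      have hKb : ∀ w ∈ ball (0:ℂ) 1, ‖K w‖ ≤ 1 := by
        intro w hw
        rw [hK]
        simp only [norm_div]
        rw [div_le_one (norm_pos_iff.mpr (hden w hw))]
        have h1 : ‖k w - (b:ℂ)‖ ^ 2 ≤ ‖k w + (b:ℂ)‖ ^ 2 := by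
          have e1 : ‖k w - (b:ℂ)‖ ^ 2 = ((k w).re - b) ^ 2 + (k w).im ^ 2 := by
            rw [Complex.sq_norm, Complex.normSq_apply]
            simp; ring
          have e2 : ‖k w + (b:ℂ)‖ ^ 2 = ((k w).re + b) ^ 2 + (k w).im ^ 2 := by
            rw [Complex.sq_norm, Complex.normSq_apply]
            simp; ring
          rw [e1, e2]
          nlinarith [hkre w hw, hbpos]
        nlinarith [norm_nonneg (k w - (b:ℂ)), norm_nonneg (k w + (b:ℂ))]
      have hK0 : K 0 = 0 := by
        rw [hK]
        simp only
        rw [hk]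
        simp only [hh0']
        have : (1:ℂ) - (a:ℂ) - (b:ℂ) = 0 := by
          rw [hb]; push_cast; ring
        rw [this]
        simp
      have hKd : DifferentiableOn ℂ K (ball 0 1) := by
        apply DifferentiableOn.div
        · exact (differentiableOn_const _).sub hdh |>.sub (differentiableOn_const _)
        · exact ((differentiableOn_const _).sub hdh).add (differentiableOn_const _)
        · exact hden
      -- Schwarz: ‖K z‖ ≤ ‖z‖
      have hKz : ‖K z‖ ≤ ‖z‖ := by
        refine le_of_forall_pos_le_add fun ε hε => ?_
        have hmapsK : MapsTo K (ball 0 1) (ball (K 0) (1 + ε)) := by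
          intro w hw
          rw [mem_ball, hK0, dist_zero_right]
          exact lt_of_le_of_lt (hKb w hw) (by linarith)
        have := dist_le_div_mul_dist_of_mapsTo_ball hKd (hmapsK.mono_right ball_subset_closedBall) hz
        rw [hK0, dist_zero_right, dist_zero_right, div_one] at this
        calc ‖K z‖ ≤ (1 + ε) * ‖z‖ := this
          _ ≤ ‖z‖ + ε := by nlinarith [norm_nonneg z, hzlt]
      -- unfold
      have hkz : k z - b = K z * (k z + b) := by
        rw [hK]
        field_simp [hden z hz]
      have hstep : ‖k z - (b:ℂ)‖ ≤ ‖z‖ * (‖k z - (b:ℂ)‖ + 2 * b) := by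
        calc ‖k z - (b:ℂ)‖ = ‖K z‖ * ‖k z + (b:ℂ)‖ := by rw [hkz, norm_mul]
          _ ≤ ‖z‖ * ‖k z + (b:ℂ)‖ := by
              apply mul_le_mul_of_nonneg_right hKz (norm_nonneg _)
          _ ≤ ‖z‖ * (‖k z - (b:ℂ)‖ + 2 * b) := by
              apply mul_le_mul_of_nonneg_left _ (norm_nonneg z)
              have : k z + (b:ℂ) = (k z - b) + 2 * b := by ring
              rw [this]
              calc ‖(k z - (b:ℂ)) + 2 * b‖ ≤ ‖k z - (b:ℂ)‖ + ‖(2 * b : ℂ)‖ := norm_add_le _ _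
                _ = ‖k z - (b:ℂ)‖ + 2 * b := by
                    congr 1
                    rw [norm_mul]
                    simp [abs_of_pos hbpos]
      have hhz : h z - (a:ℂ) = -(k z - b) := by
        rw [hk, hb]; push_cast; ring
      rw [hhz, norm_neg]
      rw [le_div_iff₀ (by linarith : (0:ℝ) < 1 - ‖z‖)]
      nlinarith [norm_nonneg (k z - (b:ℂ)), norm_nonneg z, hbpos]
  have hda : deriv f 0 = (a:ℂ) := by rw [← hh0, hh0']
  calc ‖f z - deriv f 0 * z‖ = ‖z‖ * ‖h z - (a:ℂ)‖ := by
        rw [hfz, hda, show z * h z - (a:ℂ) * z = z * (h z - (a:ℂ)) from by ring, norm_mul]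
    _ ≤ ‖z‖ * (2 * (1 - a) * ‖z‖ / (1 - ‖z‖)) :=
        mul_le_mul_of_nonneg_left key (norm_nonneg z)
    _ = 2 * (1 - a) * ‖z‖ ^ 2 / (1 - ‖z‖) := by ring

/-- Lipschitz bound for `g z = f z - a z` on a smaller disc. -/
lemma lip_bound {f : ℂ → ℂ} (hd : DifferentiableOn ℂ f (ball 0 1))
    (hm : MapsTo f (ball 0 1) (ball 0 1)) (h0 : f 0 = 0)
    (him : (deriv f 0).im = 0) {r : ℝ} (hr0 : 0 ≤ r) (hr1 : r < 1)
    {w₁ w₂ : ℂ} (hw₁ : w₁ ∈ closedBall (0:ℂ) r) (hw₂ : w₂ ∈ closedBall (0:ℂ) r) :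
    ‖(f w₁ - deriv f 0 * w₁) - (f w₂ - deriv f 0 * w₂)‖ ≤
      16 * (1 - (deriv f 0).re) / (1 - r) ^ 2 * ‖w₁ - w₂‖ := by
  set a : ℝ := (deriv f 0).re with ha
  have ha1 : a ≤ 1 := le_trans (Complex.re_le_norm _)
    (norm_deriv_le_one_of_mapsTo_ball hd (by rw [h0]; exact hm.mono_right ball_subset_closedBall) one_pos)
  set g : ℂ → ℂ := fun z => f z - deriv f 0 * z with hg
  have hgd : DifferentiableOn ℂ g (ball 0 1) :=
    hd.sub ((differentiable_id.const_mul _).differentiableOn)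
  set r' : ℝ := (1 + r) / 2 with hr'
  have hr'1 : r' < 1 := by rw [hr']; linarith
  have hrr' : r < r' := by rw [hr']; linarith
  have hr'0 : 0 < r' := by rw [hr']; linarith
  set M : ℝ := 4 * (1 - a) / (1 - r) with hM
  have hM0 : 0 ≤ M := by
    rw [hM]; apply div_nonneg <;> linarith
  have hgb : ∀ z ∈ ball (0:ℂ) r', ‖g z‖ ≤ M := by
    intro z hzr'
    have hzn : ‖z‖ < r' := by simpa using hzr'
    have hz1 : z ∈ ball (0:ℂ) 1 := by
      simp only [mem_ball, dist_zero_right]; linarith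
    calc ‖g z‖ ≤ 2 * (1 - a) * ‖z‖ ^ 2 / (1 - ‖z‖) := pick_bound hd hm h0 him hz1
      _ ≤ 2 * (1 - a) / (1 - r') := by
          have hzle : ‖z‖ ≤ 1 := by linarith
          apply div_le_div₀ (by linarith) _ (by linarith) (by linarith)
          nlinarith [norm_nonneg z, mul_nonneg (by linarith : (0:ℝ) ≤ 1 - a)
            (by nlinarith [norm_nonneg z] : (0:ℝ) ≤ 1 - ‖z‖ ^ 2)]
      _ = M := by rw [hM, hr']; field_simp; ring
  set R₁ : ℝ := (1 - r) / 2 with hR₁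
  have hR₁0 : 0 < R₁ := by rw [hR₁]; linarith
  have hderivb : ∀ w ∈ closedBall (0:ℂ) r, ‖deriv g w‖ ≤ 16 * (1 - a) / (1 - r) ^ 2 := by
    intro w hw
    have hwn : ‖w‖ ≤ r := by simpa using hw
    have hsub : ball w R₁ ⊆ ball (0:ℂ) r' := by
      intro z hzw
      rw [mem_ball, dist_eq_norm] at hzw
      rw [mem_ball, dist_zero_right]
      calc ‖z‖ = ‖(z - w) + w‖ := by ring_nf
        _ ≤ ‖z - w‖ + ‖w‖ := norm_add_le _ _
        _ < R₁ + r := by linarith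
        _ = r' := by rw [hR₁, hr']; ring
    have hsub1 : ball w R₁ ⊆ ball (0:ℂ) 1 :=
      hsub.trans (ball_subset_ball hr'1.le)
    refine le_of_forall_pos_le_add fun ε hε => ?_
    have hmapsg : MapsTo g (ball w R₁) (ball (g w) (2 * M + ε * R₁)) := by
      intro z hzw
      rw [mem_ball, dist_eq_norm]
      have h1 : ‖g z‖ ≤ M := hgb z (hsub hzw)
      have h2 : ‖g w‖ ≤ M := hgb w (hsub (mem_ball_self hR₁0))
      calc ‖g z - g w‖ ≤ ‖g z‖ + ‖g w‖ := norm_sub_le _ _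
        _ ≤ 2 * M := by linarith
        _ < 2 * M + ε * R₁ := by nlinarith
    have := norm_deriv_le_div_of_mapsTo_ball (hgd.mono hsub1) (hmapsg.mono_right ball_subset_closedBall) hR₁0
    calc ‖deriv g w‖ ≤ (2 * M + ε * R₁) / R₁ := this
      _ = 2 * M / R₁ + ε := by field_simp
      _ = 16 * (1 - a) / (1 - r) ^ 2 + ε := by
          rw [hM, hR₁]; field_simp; ring
  have hdiffat : ∀ x ∈ closedBall (0:ℂ) r, DifferentiableAt ℂ g x := by
    intro x hx
    have hx1 : ball (0:ℂ) 1 ∈ nhds x := isOpen_ball.mem_nhds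
      (by simp only [mem_ball, dist_zero_right]
          exact lt_of_le_of_lt (by simpa using hx) hr1)
    exact hgd.differentiableAt hx1
  have := Convex.norm_image_sub_le_of_norm_deriv_le hdiffat hderivb
    (convex_closedBall _ _) hw₂ hw₁
  simpa using this

end Aux

/-- If a transition family `{ω_{s,t}}` on an interval `I` is continuous
(equivalently, `a_{s,t} = ω_{s,t}'(0)` is continuous in `(s,t)`), then each
`ω_{s,t}` is injective on the unit disc. -/
theorem transition_family_univalent (I : Set ℝ) (hI : I.OrdConnected)
    (ω : ℝ → ℝ → ℂ → ℂ)
    (hdiff : ∀ s ∈ I, ∀ t ∈ I, s ≤ t → DifferentiableOn ℂ (ω s t) (ball 0 1))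
    (hmaps : ∀ s ∈ I, ∀ t ∈ I, s ≤ t → MapsTo (ω s t) (ball 0 1) (ball 0 1))
    (h0 : ∀ s ∈ I, ∀ t ∈ I, s ≤ t → ω s t 0 = 0)
    (hderiv : ∀ s ∈ I, ∀ t ∈ I, s ≤ t →
      (deriv (ω s t) 0).im = 0 ∧ 0 < (deriv (ω s t) 0).re)
    (hid : ∀ t ∈ I, ∀ z ∈ ball (0 : ℂ) 1, ω t t z = z)
    (hcomp : ∀ t₀ ∈ I, ∀ t₁ ∈ I, ∀ t₂ ∈ I, t₀ ≤ t₁ → t₁ ≤ t₂ →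
      ∀ z ∈ ball (0 : ℂ) 1, ω t₁ t₂ (ω t₀ t₁ z) = ω t₀ t₂ z)
    (hcont : ContinuousOn (fun p : ℝ × ℝ => (deriv (ω p.1 p.2) 0).re)
      {p : ℝ × ℝ | p.1 ∈ I ∧ p.2 ∈ I ∧ p.1 ≤ p.2}) :
    ∀ s ∈ I, ∀ t ∈ I, s ≤ t → InjOn (ω s t) (ball (0 : ℂ) 1) := by
  intro s hs t ht hst z₁ hz₁ z₂ hz₂ heq
  by_contra hne
  have hIcc : Icc s t ⊆ I := hI.out hs ht
  set r : ℝ := max ‖z₁‖ ‖z₂‖ with hr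
  have hr1 : r < 1 := max_lt (by simpa using hz₁) (by simpa using hz₂)
  have hr0 : 0 ≤ r := le_trans (norm_nonneg z₁) (le_max_left _ _)
  set S : Set ℝ := {u | u ∈ Icc s t ∧ ω s u z₁ = ω s u z₂} with hS
  have htS : t ∈ S := ⟨⟨hst, le_rfl⟩, heq⟩
  have hSne : S.Nonempty := ⟨t, htS⟩
  have hbdd : BddBelow S := ⟨s, fun u hu => hu.1.1⟩
  set τ : ℝ := sInf S with hτ
  have hτt : τ ≤ t := csInf_le hbdd htS
  have hsτ : s ≤ τ := le_csInf hSne fun u hu => hu.1.1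
  have hτI : τ ∈ I := hIcc ⟨hsτ, hτt⟩
  -- the derivative of ω τ τ at 0 is 1
  have hderivττ : deriv (ω τ τ) 0 = 1 := by
    have heq1 : ω τ τ =ᶠ[nhds (0:ℂ)] id :=
      Filter.eventuallyEq_of_mem (isOpen_ball.mem_nhds (mem_ball_self one_pos))
        fun z hz => hid τ hτI z hz
    rw [heq1.deriv_eq]
    exact deriv_id 0
  set ε : ℝ := (1 - r) ^ 2 / 32 with hε
  have hεpos : 0 < ε := by
    rw [hε]
    have h1r : 0 < 1 - r := by linarith
    positivity
  have hc := hcont (τ, τ) ⟨hτI, hτI, le_rfl⟩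
  rw [Metric.continuousWithinAt_iff] at hc
  obtain ⟨δ, hδpos, hδ⟩ := hc ε hεpos
  -- choose u' ∈ S close to τ
  obtain ⟨u', hu'S, hu'lt⟩ := exists_lt_of_csInf_lt hSne (by linarith : sInf S < τ + δ / 2)
  have hτu' : τ ≤ u' := csInf_le hbdd hu'S
  -- choose u ∉ S close to τ
  set u : ℝ := max s (τ - δ / 2) with hu
  have hsu : s ≤ u := le_max_left _ _
  have huτ : u ≤ τ := max_le hsτ (by linarith)
  have hut : u ≤ t := huτ.trans hτt
  have huI : u ∈ I := hIcc ⟨hsu, hut⟩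
  have hu'I : u' ∈ I := hIcc ⟨hsτ.trans hτu', hu'S.1.2⟩
  have huu' : u ≤ u' := huτ.trans hτu'
  have hu_notS : u ∉ S := by
    intro huS
    have h1 : τ ≤ u := csInf_le hbdd huS
    have h2 : u = s := by
      rcases le_or_gt (τ - δ / 2) s with h | h
      · rw [hu, max_eq_left h]
      · exfalso
        have : u = τ - δ / 2 := by rw [hu, max_eq_right h.le]
        linarith
    rw [h2] at huS
    exact hne (by rw [← hid s hs z₁ hz₁, ← hid s hs z₂ hz₂]; exact huS.2)
  -- continuity estimate
  have hdist : dist ((u, u') : ℝ × ℝ) ((τ, τ) : ℝ × ℝ) < δ := by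
    rw [Prod.dist_eq]
    apply max_lt
    · rw [Real.dist_eq, abs_lt]
      constructor <;> [linarith [le_max_right s (τ - δ / 2)]; linarith]
    · rw [Real.dist_eq, abs_lt]
      constructor <;> linarith
  have hclose := hδ (show ((u, u') : ℝ × ℝ) ∈ _ from ⟨huI, hu'I, huu'⟩) hdist
  simp only [hderivττ, Complex.one_re, Real.dist_eq] at hclose
  have halow : 1 - (deriv (ω u u') 0).re < ε := by
    rcases abs_lt.mp hclose with ⟨h1, _⟩
    linarith
  -- the points w₁, w₂
  set w₁ : ℂ := ω s u z₁ with hw₁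
  set w₂ : ℂ := ω s u z₂ with hw₂
  have hwr : ∀ z : ℂ, z ∈ ball (0:ℂ) 1 → ‖z‖ ≤ r → ω s u z ∈ closedBall (0:ℂ) r := by
    intro z hzb hzr
    rw [mem_closedBall, dist_zero_right]
    have := Complex.norm_le_norm_of_mapsTo_ball (hdiff s hs u huI hsu)
      ((hmaps s hs u huI hsu).mono_right ball_subset_closedBall) (h0 s hs u huI hsu) (show ‖z‖ < 1 by simpa using hzb)
    calc ‖ω s u z‖ ≤ ‖z‖ := this
      _ ≤ r := hzr
  have hw₁cb : w₁ ∈ closedBall (0:ℂ) r := hwr z₁ hz₁ (le_max_left _ _)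
  have hw₂cb : w₂ ∈ closedBall (0:ℂ) r := hwr z₂ hz₂ (le_max_right _ _)
  have hwne : w₁ ≠ w₂ := fun h => hu_notS ⟨⟨hsu, hut⟩, h⟩
  have hfw : ω u u' w₁ = ω u u' w₂ := by
    rw [hw₁, hw₂, hcomp s hs u huI u' hu'I hsu huu' z₁ hz₁,
      hcomp s hs u huI u' hu'I hsu huu' z₂ hz₂]
    exact hu'S.2
  -- apply the Lipschitz bound
  have ha_im : (deriv (ω u u') 0).im = 0 := (hderiv u huI u' hu'I huu').1
  have key := lip_bound (hdiff u huI u' hu'I huu') (hmaps u huI u' hu'I huu')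
    (h0 u huI u' hu'I huu') ha_im hr0 hr1 hw₁cb hw₂cb
  have hE : (ω u u' w₁ - deriv (ω u u') 0 * w₁) - (ω u u' w₂ - deriv (ω u u') 0 * w₂)
      = deriv (ω u u') 0 * (w₂ - w₁) := by rw [hfw]; ring
  rw [hE, norm_mul, norm_sub_rev w₂ w₁] at key
  have hwpos : 0 < ‖w₁ - w₂‖ := norm_pos_iff.mpr (sub_ne_zero.mpr hwne)
  have hre_le : (deriv (ω u u') 0).re ≤ ‖deriv (ω u u') 0‖ := Complex.re_le_norm _
  have hmain : (deriv (ω u u') 0).re ≤ 16 * (1 - (deriv (ω u u') 0).re) / (1 - r) ^ 2 := by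
    have := le_of_mul_le_mul_right
      (le_trans (mul_le_mul_of_nonneg_right hre_le (norm_nonneg _)) key) hwpos
    exact this
  have hsq : (1 - r) ^ 2 ≤ 1 := by nlinarith
  have hsqpos : 0 < (1 - r) ^ 2 := by
    have h1r : 0 < 1 - r := by linarith
    positivity
  rw [le_div_iff₀ hsqpos] at hmain
  rw [hε] at halow
  nlinarith [halow, hmain, hsq, hsqpos]
end

section
/- Let {f_t}_{t∈I} be a Loewner chain (f_t : 𝔻 → ℂ analytic, f_t(0)=0, f_t'(0)>0, f_s ≺ f_t for s ≤ t) with a(t) = f_t'(0). Then the map t ↦ f_t is continuous from I to the space of analytic functions with the topology of locally uniform convergence if and only if a(t) is continuous on I. -/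
open Metric Set Filter Topology

/-- Key Schwarz-type estimate: a self map of the disc fixing `0` with derivative
`l ∈ (0,1]` at `0` is close to the identity when `l` is close to `1`. -/
lemma omega_close_to_id {ω : ℂ → ℂ} (hd : DifferentiableOn ℂ ω (ball 0 1))
    (hm : MapsTo ω (ball 0 1) (ball 0 1)) (h0 : ω 0 = 0) {l : ℝ}
    (hl : deriv ω 0 = (l : ℂ)) (hl0 : 0 < l) {z : ℂ} {r : ℝ} (hr : r < 1)
    (hz : ‖z‖ ≤ r) : ‖ω z - z‖ ≤ (1 - l) * (2 / (1 - r)) := by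
  have hz1 : z ∈ ball (0 : ℂ) 1 := by
    rw [mem_ball_zero_iff]; exact lt_of_le_of_lt hz hr
  have hball : ball (0 : ℂ) 1 ∈ 𝓝 (0 : ℂ) := ball_mem_nhds _ one_pos
  set p := dslope ω 0 with hp
  have hpd : DifferentiableOn ℂ p (ball 0 1) := (Complex.differentiableOn_dslope hball).mpr hd
  have hm' : MapsTo ω (ball 0 1) (ball (ω 0) 1) := by rwa [h0]
  have hpb : ∀ w ∈ ball (0 : ℂ) 1, ‖p w‖ ≤ 1 := fun w hw => by
    simpa using Complex.norm_dslope_le_div_of_mapsTo_ball hd (hm'.mono_right ball_subset_closedBall) hw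
  have hp0 : p 0 = (l : ℂ) := by rw [hp, dslope_same, hl]
  have hl1 : l ≤ 1 := by
    have h := hpb 0 (mem_ball_self one_pos)
    rw [hp0, Complex.norm_real, Real.norm_eq_abs] at h
    calc l ≤ |l| := le_abs_self l
      _ ≤ 1 := h
  have hrn : (0:ℝ) < 1 - r := by linarith
  rcases eq_or_lt_of_le hl1 with heq | hlt
  · -- l = 1 : by Schwarz equality, ω = id
    subst heq
    have haff := Complex.affine_of_mapsTo_ball_of_exists_norm_dslope_eq_div hd (hm'.mono_right ball_subset_closedBall)
      (mem_ball_self one_pos)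
      (by rw [dslope_same, hl]; norm_num)
    have hωz := haff hz1
    simp only [dslope_same, hl, h0, Complex.ofReal_one, sub_zero, smul_eq_mul,
      mul_one, zero_add] at hωz
    rw [hωz, sub_self, norm_zero, sub_self, zero_mul]
  · -- l < 1
    set q : ℂ → ℂ := fun w => (p w - l) / (1 - l * p w) with hq
    have hden : ∀ w ∈ ball (0 : ℂ) 1, ‖(1 : ℂ) - l * p w‖ ≥ 1 - l := by
      intro w hw
      have h1 : ‖(l : ℂ) * p w‖ ≤ l := by
        rw [norm_mul, Complex.norm_real, Real.norm_eq_abs, abs_of_pos hl0]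
        nlinarith [hpb w hw, norm_nonneg (p w)]
      calc 1 - l ≤ ‖(1:ℂ)‖ - ‖(l:ℂ) * p w‖ := by rw [norm_one]; linarith
        _ ≤ ‖(1:ℂ) - l * p w‖ := norm_sub_norm_le _ _
    have hden' : ∀ w ∈ ball (0 : ℂ) 1, (1 : ℂ) - l * p w ≠ 0 := by
      intro w hw h
      have := hden w hw
      rw [h, norm_zero] at this
      linarith
    have hqd : DifferentiableOn ℂ q (ball 0 1) :=
      (hpd.sub (differentiableOn_const _)).div
        ((differentiableOn_const _).sub ((differentiableOn_const _).mul hpd)) hden'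
    have hq0 : q 0 = 0 := by
      rw [hq]; simp [hp0]
    have hqb : ∀ w ∈ ball (0 : ℂ) 1, ‖q w‖ ≤ 1 := by
      intro w hw
      have hu : ‖p w‖ ≤ 1 := hpb w hw
      have hsq : Complex.normSq (p w - l) ≤ Complex.normSq (1 - l * p w) := by
        have hre : (p w).re ^ 2 + (p w).im ^ 2 ≤ 1 := by
          have h2 : ‖p w‖ ≤ 1 := hu
          nlinarith [Complex.sq_norm (p w), Complex.normSq_apply (p w),
            norm_nonneg (p w)]
        simp only [Complex.normSq_apply, Complex.sub_re, Complex.sub_im, Complex.mul_re,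
          Complex.mul_im, Complex.ofReal_re, Complex.ofReal_im, Complex.one_re, Complex.one_im]
        ring_nf
        nlinarith [mul_nonneg (by nlinarith : (0:ℝ) ≤ 1 - l^2)
          (by nlinarith : (0:ℝ) ≤ 1 - (p w).re^2 - (p w).im^2)]
      have hnorm : ‖p w - (l:ℂ)‖ ≤ ‖(1:ℂ) - l * p w‖ := by
        rw [Complex.norm_def, Complex.norm_def]
        exact Real.sqrt_le_sqrt hsq
      rw [hq]
      simp only [norm_div]
      rw [div_le_one (lt_of_lt_of_le (by linarith) (hden w hw))]
      exact hnorm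
    have hqslope : ∀ w ∈ ball (0 : ℂ) 1, ‖dslope q 0 w‖ ≤ 1 := by
      intro w hw
      refine le_of_forall_pos_le_add fun ε hε => ?_
      have hmq : MapsTo q (ball 0 1) (ball (q 0) (1 + ε)) := by
        intro x hx
        rw [hq0, mem_ball_zero_iff]
        exact lt_of_le_of_lt (hqb x hx) (by linarith)
      have := Complex.norm_dslope_le_div_of_mapsTo_ball hqd (hmq.mono_right ball_subset_closedBall) hw
      simpa using this
    have hqlin : ‖q z‖ ≤ ‖z‖ := by
      rcases eq_or_ne z 0 with rfl | hz0
      · simp [hq0]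
      · have h := hqslope z hz1
        rw [dslope_of_ne _ hz0, slope_def_field, hq0, sub_zero, sub_zero, norm_div] at h
        rw [div_le_one (norm_pos_iff.mpr hz0)] at h
        simpa using h
    have hkey : ‖p z - (l:ℂ)‖ ≤ ‖z‖ * ‖(1:ℂ) - l * p z‖ := by
      have hd0 := hden' z hz1
      have hmul : q z * ((1:ℂ) - l * p z) = p z - l := div_mul_cancel₀ _ hd0
      calc ‖p z - (l:ℂ)‖ = ‖q z‖ * ‖(1:ℂ) - l * p z‖ := by rw [← hmul, norm_mul]
        _ ≤ ‖z‖ * ‖(1:ℂ) - l * p z‖ :=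
          mul_le_mul_of_nonneg_right hqlin (norm_nonneg _)
    have hnl : ‖(1:ℂ) - (l:ℂ)‖ = 1 - l := by
      rw [← Complex.ofReal_one, ← Complex.ofReal_sub, Complex.norm_real, Real.norm_eq_abs,
        abs_of_nonneg (by linarith)]
    have e1 : ‖(1:ℂ) - p z‖ ≤ (1 - l) + ‖p z - (l:ℂ)‖ := by
      calc ‖(1:ℂ) - p z‖ = ‖((1:ℂ) - (l:ℂ)) + ((l:ℂ) - p z)‖ := by
            rw [show (1:ℂ) - p z = ((1:ℂ) - (l:ℂ)) + ((l:ℂ) - p z) from by ring]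
        _ ≤ ‖(1:ℂ) - (l:ℂ)‖ + ‖(l:ℂ) - p z‖ := norm_add_le _ _
        _ = (1 - l) + ‖p z - (l:ℂ)‖ := by rw [norm_sub_rev (l:ℂ), hnl]
    have e2 : ‖(1:ℂ) - l * p z‖ ≤ ‖(1:ℂ) - p z‖ + (1 - l) := by
      calc ‖(1:ℂ) - l * p z‖ = ‖((1:ℂ) - p z) + ((1:ℂ) - (l:ℂ)) * p z‖ := by
            rw [show (1:ℂ) - l * p z = ((1:ℂ) - p z) + ((1:ℂ) - (l:ℂ)) * p z from by ring]
        _ ≤ ‖(1:ℂ) - p z‖ + ‖(1:ℂ) - (l:ℂ)‖ * ‖p z‖ := by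
            refine (norm_add_le _ _).trans ?_
            rw [norm_mul]
        _ ≤ ‖(1:ℂ) - p z‖ + (1 - l) := by
            rw [hnl]
            nlinarith [hpb z hz1, norm_nonneg (p z)]
    -- combine
    have hA : ‖(1:ℂ) - p z‖ * (1 - ‖z‖) ≤ (1 - l) * 2 := by
      have hz1' : ‖z‖ < 1 := lt_of_le_of_lt hz hr
      nlinarith [norm_nonneg z, norm_nonneg ((1:ℂ) - p z), norm_nonneg ((1:ℂ) - l * p z),
        mul_le_mul_of_nonneg_left e2 (norm_nonneg z), e1, hkey]
    have hAfin : ‖(1:ℂ) - p z‖ ≤ (1 - l) * (2 / (1 - r)) := by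
      rw [mul_div_assoc']
      rw [le_div_iff₀ hrn]
      calc ‖(1:ℂ) - p z‖ * (1 - r) ≤ ‖(1:ℂ) - p z‖ * (1 - ‖z‖) := by
            nlinarith [norm_nonneg ((1:ℂ) - p z)]
        _ ≤ (1 - l) * 2 := hA
    rcases eq_or_ne z 0 with rfl | hz0
    · rw [h0, sub_self, norm_zero]
      have h1l : (0:ℝ) ≤ 1 - l := by linarith
      positivity
    · have hωz : ω z = z * p z := by
        rw [hp, dslope_of_ne _ hz0, slope_def_field, h0, sub_zero, sub_zero,
          mul_div_cancel₀ _ hz0]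
      calc ‖ω z - z‖ = ‖z‖ * ‖p z - 1‖ := by
            rw [hωz, show z * p z - z = z * (p z - 1) from by ring, norm_mul]
        _ ≤ 1 * ‖(1:ℂ) - p z‖ := by
            rw [norm_sub_rev]
            apply mul_le_mul_of_nonneg_right _ (norm_nonneg _)
            exact le_of_lt (lt_of_le_of_lt hz hr)
        _ ≤ (1 - l) * (2 / (1 - r)) := by rw [one_mul]; exact hAfin


/-- A Loewner chain `{f_t}` with `a(t) = f_t'(0)` is continuous in the topology of
locally uniform convergence on the unit disc if and only if `a` is continuous. -/
theorem loewner_chain_continuous_iff (I : Set ℝ) (f : ℝ → ℂ → ℂ) (a : ℝ → ℝ)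
    (hdiff : ∀ t ∈ I, DifferentiableOn ℂ (f t) (ball 0 1))
    (h0 : ∀ t ∈ I, f t 0 = 0)
    (ha : ∀ t ∈ I, deriv (f t) 0 = (a t : ℂ) ∧ 0 < a t)
    (hsub : ∀ s ∈ I, ∀ t ∈ I, s ≤ t → ∃ ω : ℂ → ℂ,
      DifferentiableOn ℂ ω (ball 0 1) ∧ MapsTo ω (ball 0 1) (ball 0 1) ∧
      ω 0 = 0 ∧ ∀ z ∈ ball (0 : ℂ) 1, f s z = f t (ω z)) :
    ContinuousOn a I ↔
      ∀ t₀ ∈ I, TendstoLocallyUniformlyOn f (f t₀) (nhdsWithin t₀ I)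
        (ball (0 : ℂ) 1) := by
  have h0mem : (0:ℂ) ∈ ball (0:ℂ) 1 := mem_ball_self one_pos
  constructor
  · -- continuity of a implies locally uniform convergence
    intro hacont t₀ ht₀
    -- refined subordination: the transition map has derivative a s / a t at 0
    have main : ∀ s ∈ I, ∀ t ∈ I, s ≤ t → ∃ ω : ℂ → ℂ,
        DifferentiableOn ℂ ω (ball 0 1) ∧ MapsTo ω (ball 0 1) (ball 0 1) ∧
        ω 0 = 0 ∧ (∀ z ∈ ball (0 : ℂ) 1, f s z = f t (ω z)) ∧
        deriv ω 0 = ((a s / a t : ℝ) : ℂ) := by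
      intro s hs t ht hst
      obtain ⟨ω, hω1, hω2, hω3, hω4⟩ := hsub s hs t ht hst
      refine ⟨ω, hω1, hω2, hω3, hω4, ?_⟩
      have hωat : DifferentiableAt ℂ ω 0 :=
        (hω1 0 h0mem).differentiableAt (isOpen_ball.mem_nhds h0mem)
      have hfat : DifferentiableAt ℂ (f t) 0 :=
        ((hdiff t ht) 0 h0mem).differentiableAt (isOpen_ball.mem_nhds h0mem)
      have heq : f s =ᶠ[𝓝 (0:ℂ)] (f t ∘ ω) := by
        filter_upwards [isOpen_ball.mem_nhds h0mem] with z hz using hω4 z hz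
      have hds : deriv (f s) 0 = deriv (f t ∘ ω) 0 := heq.deriv_eq
      have hcomp : deriv (f t ∘ ω) 0 = deriv (f t) (ω 0) * deriv ω 0 :=
        deriv_comp 0 (by rw [hω3]; exact hfat) hωat
      rw [hω3, (ha t ht).1] at hcomp
      rw [(ha s hs).1, hcomp] at hds
      have hat : ((a t : ℝ) : ℂ) ≠ 0 :=
        Complex.ofReal_ne_zero.mpr (ne_of_gt (ha t ht).2)
      rw [Complex.ofReal_div, eq_div_iff hat]
      rw [hds]; ring
    rw [tendstoLocallyUniformlyOn_iff_forall_isCompact isOpen_ball]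
    intro K hK hKc
    rw [Metric.tendstoUniformlyOn_iff]
    intro ε hε
    -- an upper bound t₁ in I controlling a neighborhood of t₀ in I
    obtain ⟨t₁, ht₁, ht₀₁, hJmem⟩ : ∃ t₁ ∈ I, t₀ ≤ t₁ ∧ I ∩ Iic t₁ ∈ 𝓝[I] t₀ := by
      by_cases hex : ∃ u ∈ I, t₀ < u
      · obtain ⟨u, hu, hu'⟩ := hex
        exact ⟨u, hu, hu'.le,
          inter_mem self_mem_nhdsWithin (mem_nhdsWithin_of_mem_nhds (Iic_mem_nhds hu'))⟩
      · push_neg at hex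
        refine ⟨t₀, ht₀, le_rfl, ?_⟩
        exact inter_mem self_mem_nhdsWithin (mem_of_superset self_mem_nhdsWithin hex)
    -- radius bound for K
    obtain ⟨r, hr0, hr1, hrK⟩ : ∃ r : ℝ, 0 ≤ r ∧ r < 1 ∧ ∀ z ∈ K, ‖z‖ ≤ r := by
      rcases K.eq_empty_or_nonempty with rfl | hne
      · exact ⟨0, le_rfl, one_pos, by simp⟩
      · obtain ⟨z₀, hz₀K, hz₀max⟩ := hKc.exists_isMaxOn hne continuous_norm.continuousOn
        exact ⟨‖z₀‖, norm_nonneg _, by simpa [mem_ball_zero_iff] using hK hz₀K,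
          fun z hz => isMaxOn_iff.mp hz₀max z hz⟩
    set r' : ℝ := (1 + r)/2 with hr'def
    have hrr' : r < r' := by rw [hr'def]; linarith
    have hr'1 : r' < 1 := by rw [hr'def]; linarith
    have hρ : (0:ℝ) < r' - r := by linarith
    -- uniform bound M on the disc of radius r'
    obtain ⟨M, hM0, hM⟩ : ∃ M : ℝ, 0 ≤ M ∧
        ∀ t ∈ I ∩ Iic t₁, ∀ z : ℂ, ‖z‖ ≤ r' → ‖f t z‖ ≤ M := by
      have hsub' : closedBall (0:ℂ) r' ⊆ ball 0 1 := closedBall_subset_ball hr'1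
      have hcont : ContinuousOn (fun z => ‖f t₁ z‖) (closedBall 0 r') :=
        (((hdiff t₁ ht₁).continuousOn).mono hsub').norm
      obtain ⟨z₀, _, hmax'⟩ := (isCompact_closedBall (0:ℂ) r').exists_isMaxOn
        ⟨0, by simp; linarith⟩ hcont
      have hmax := isMaxOn_iff.mp hmax'
      refine ⟨‖f t₁ z₀‖, norm_nonneg _, ?_⟩
      rintro t ⟨htI, htle⟩ z hz
      obtain ⟨ω, hω1, hω2, hω3, hω4, hω5⟩ := main t htI t₁ ht₁ htle
      have hzball : z ∈ ball (0:ℂ) 1 := by rw [mem_ball_zero_iff]; linarith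
      rw [hω4 z hzball]
      have hωz : ‖ω z‖ ≤ ‖z‖ := by
        have := Complex.norm_le_norm_of_mapsTo_ball hω1 (hω2.mono_right ball_subset_closedBall) hω3
          (show ‖z‖ < 1 by linarith)
        exact this
      exact hmax (ω z) (by rw [mem_closedBall_zero_iff]; exact le_trans hωz hz)
    set L : ℝ := 2*(M+1)/(r'-r) with hLdef
    have hL0 : 0 < L := by rw [hLdef]; positivity
    -- Lipschitz estimate on the disc of radius r
    have hLip : ∀ t ∈ I ∩ Iic t₁, ∀ z : ℂ, ‖z‖ ≤ r → ∀ w : ℂ, ‖w‖ ≤ r →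
        ‖f t w - f t z‖ ≤ L * ‖w - z‖ := by
      intro t ht z hz w hw
      by_cases hcase : ‖w - z‖ < r' - r
      · have hsub2 : ball z (r'-r) ⊆ ball (0:ℂ) 1 := by
          intro x hx
          rw [mem_ball, dist_eq_norm] at hx
          rw [mem_ball_zero_iff]
          calc ‖x‖ = ‖(x - z) + z‖ := by ring_nf
            _ ≤ ‖x - z‖ + ‖z‖ := norm_add_le _ _
            _ < (r' - r) + r := by linarith
            _ = r' := by ring
            _ < 1 := hr'1
        have hdz : DifferentiableOn ℂ (f t) (ball z (r'-r)) := (hdiff t ht.1).mono hsub2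
        have hmz : MapsTo (f t) (ball z (r'-r)) (ball (f t z) (2*(M+1))) := by
          intro x hx
          rw [mem_ball, dist_eq_norm]
          have hx' : ‖x‖ ≤ r' := by
            rw [mem_ball, dist_eq_norm] at hx
            calc ‖x‖ = ‖(x - z) + z‖ := by ring_nf
              _ ≤ ‖x - z‖ + ‖z‖ := norm_add_le _ _
              _ ≤ (r' - r) + r := by linarith
              _ = r' := by ring
          calc ‖f t x - f t z‖ ≤ ‖f t x‖ + ‖f t z‖ := norm_sub_le _ _
            _ ≤ M + M := add_le_add (hM t ht x hx') (hM t ht z (by linarith))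
            _ < 2*(M+1) := by linarith
        have := Complex.dist_le_div_mul_dist_of_mapsTo_ball hdz (hmz.mono_right ball_subset_closedBall)
          (show w ∈ ball z (r'-r) by rw [mem_ball, dist_eq_norm]; exact hcase)
        rwa [dist_eq_norm, dist_eq_norm, ← hLdef] at this
      · push_neg at hcase
        calc ‖f t w - f t z‖ ≤ ‖f t w‖ + ‖f t z‖ := norm_sub_le _ _
          _ ≤ M + M := add_le_add (hM t ht w (by linarith)) (hM t ht z (by linarith))
          _ ≤ L * (r' - r) := by rw [hLdef]; field_simp; linarith
          _ ≤ L * ‖w - z‖ := mul_le_mul_of_nonneg_left hcase hL0.le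
    set C : ℝ := 2/(1-r) with hCdef
    have hC0 : 0 < C := by rw [hCdef]; apply div_pos two_pos; linarith
    have hat₀ : 0 < a t₀ := (ha t₀ ht₀).2
    set η : ℝ := min (a t₀ / 2) (ε * (a t₀/2) / (L*C + 1)) with hηdef
    have hη0 : 0 < η := by
      rw [hηdef]
      refine lt_min (by linarith) (div_pos (mul_pos hε (by linarith)) ?_)
      nlinarith [mul_pos hL0 hC0]
    have hev : ∀ᶠ t in 𝓝[I] t₀, |a t - a t₀| < η := by
      have hcw : Tendsto a (𝓝[I] t₀) (𝓝 (a t₀)) := hacont t₀ ht₀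
      have := Metric.tendsto_nhds.mp hcw η hη0
      filter_upwards [this] with t ht
      rwa [Real.dist_eq] at ht
    filter_upwards [hev, hJmem] with t hta htJ
    intro z hzK
    have hzr : ‖z‖ ≤ r := hrK z hzK
    have hzball : z ∈ ball (0:ℂ) 1 := by rw [mem_ball_zero_iff]; linarith
    -- the common final estimate
    have final : ∀ ω : ℂ → ℂ, ∀ l : ℝ, DifferentiableOn ℂ ω (ball 0 1) →
        MapsTo ω (ball 0 1) (ball 0 1) → ω 0 = 0 → deriv ω 0 = (l : ℂ) → 0 < l →
        1 - l ≤ 2*η/(a t₀) → ∀ u ∈ I ∩ Iic t₁, ‖f u (ω z) - f u z‖ < ε := by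
      intro ω l hω1 hω2 hω3 hω5 hl0 hl u hu
      have hωz : ‖ω z‖ ≤ ‖z‖ := by
        have := Complex.norm_le_norm_of_mapsTo_ball hω1 (hω2.mono_right ball_subset_closedBall) hω3
          (show ‖z‖ < 1 by linarith)
        exact this
      have hstep1 : ‖f u (ω z) - f u z‖ ≤ L * ‖ω z - z‖ :=
        hLip u hu z hzr (ω z) (le_trans hωz hzr)
      have hstep2 : ‖ω z - z‖ ≤ (1 - l) * C := by
        rw [hCdef]
        exact omega_close_to_id hω1 hω2 hω3 hω5 hl0 hr1 hzr
      have hη2 : η ≤ ε * (a t₀/2) / (L*C + 1) := min_le_right _ _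
      calc ‖f u (ω z) - f u z‖ ≤ L * ((1 - l) * C) :=
            le_trans hstep1 (mul_le_mul_of_nonneg_left hstep2 hL0.le)
        _ ≤ L * C * (2*η/(a t₀)) := by
            rw [show L * ((1-l)*C) = L * C * (1-l) by ring]
            exact mul_le_mul_of_nonneg_left hl (by positivity)
        _ < ε := by
            have hLC : (0:ℝ) < L*C + 1 := by nlinarith [mul_pos hL0 hC0]
            have h1 : η * (L*C+1) ≤ ε * (a t₀/2) := (le_div_iff₀ hLC).mp hη2
            rw [show L*C*(2*η/(a t₀)) = (L*C*(2*η))/(a t₀) by ring, div_lt_iff₀ hat₀]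
            nlinarith [mul_pos hL0 hC0, hη0]
    rcases le_total t t₀ with hle | hle
    · obtain ⟨ω, hω1, hω2, hω3, hω4, hω5⟩ := main t htJ.1 t₀ ht₀ hle
      have hl0 : 0 < a t / a t₀ := div_pos (ha t htJ.1).2 hat₀
      have hl : 1 - a t / a t₀ ≤ 2*η/(a t₀) := by
        have habs := abs_lt.mp hta
        have heq1 : 1 - a t/a t₀ = (a t₀ - a t)/a t₀ := by field_simp
        rw [heq1, div_le_div_iff_of_pos_right hat₀]
        linarith [habs.1]
      have hfinal := final ω (a t / a t₀) hω1 hω2 hω3 hω5 hl0 hl t₀ ⟨ht₀, ht₀₁⟩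
      rw [dist_eq_norm, hω4 z hzball, norm_sub_rev]
      exact hfinal
    · obtain ⟨ω, hω1, hω2, hω3, hω4, hω5⟩ := main t₀ ht₀ t htJ.1 hle
      have hat : 0 < a t := (ha t htJ.1).2
      have hl0 : 0 < a t₀ / a t := div_pos hat₀ hat
      have hl : 1 - a t₀ / a t ≤ 2*η/(a t₀) := by
        have habs := abs_lt.mp hta
        have hη1 : η ≤ a t₀/2 := min_le_left _ _
        have h2 : a t₀/2 ≤ a t := by linarith [habs.1]
        have heq1 : 1 - a t₀/a t = (a t - a t₀)/a t := by field_simp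
        rw [heq1, div_le_div_iff₀ hat hat₀]
        nlinarith [habs.2, hη0]
      have hfinal := final ω (a t₀ / a t) hω1 hω2 hω3 hω5 hl0 hl t htJ
      rw [dist_eq_norm, hω4 z hzball]
      exact hfinal
  · -- locally uniform convergence implies continuity of a
    intro h t₀ ht₀
    have hev : ∀ᶠ t in 𝓝[I] t₀, DifferentiableOn ℂ (f t) (ball 0 1) := by
      filter_upwards [self_mem_nhdsWithin] with t ht using hdiff t ht
    have hderiv := (h t₀ ht₀).deriv hev isOpen_ball
    have htend : Tendsto (fun t => deriv (f t) 0) (𝓝[I] t₀) (𝓝 (deriv (f t₀) 0)) :=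
      hderiv.tendsto_at h0mem
    rw [(ha t₀ ht₀).1] at htend
    have htend2 : Tendsto (fun t => ((a t : ℂ))) (𝓝[I] t₀) (𝓝 ((a t₀ : ℂ))) := by
      refine htend.congr' ?_
      filter_upwards [self_mem_nhdsWithin] with t ht
      exact (ha t ht).1
    have := (Complex.continuous_re.tendsto _).comp htend2
    simpa [Function.comp_def, ContinuousWithinAt] using this
end
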